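/- arXiv:2508.11587 — 5 statements merged into one kernel-verified Lean document; each statement's English description precedes it below -/
import Mathlib

section
/- The number of parking functions of length n is (n+1)^(n-1). -/
open Finset

/-- A parking function of length `n`: a word with entries in `{1, ..., n}` whose weakly
increasing rearrangement `b` satisfies `b i ≤ i` (1-indexed). -/
def IsParkingFunction (n : ℕ) (α : Fin n → ℕ) : Prop :=
  (∀ i, 1 ≤ α i ∧ α i ≤ n) ∧
    ∃ σ : Equiv.Perm (Fin n),
      (∀ i j : Fin n, i ≤ j → α (σ i) ≤ α (σ j)) ∧
      ∀ i : Fin n, α (σ i) ≤ (i : ℕ) + 1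


section Cycle
variable (m : ℕ) (c : ℕ → ℤ)

private def S (k : ℕ) : ℤ := ∑ j ∈ Finset.range k, c j

lemma S_add (a b : ℕ) : S c (a + b) = S c a + ∑ j ∈ Finset.range b, c (a + j) := by
  induction b with
  | zero => simp [S]
  | succ b ih => rw [← Nat.add_assoc, S, Finset.sum_range_succ, ← S, ih, Finset.sum_range_succ]
                 ring

variable (hper : ∀ j, c (j + m) = c j) (hsum : ∑ j ∈ Finset.range m, c j = 1)

include hper hsum in
lemma S_period (k : ℕ) : S c (k + m) = S c k + 1 := by
  induction k with
  | zero => simp [S, hsum]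
  | succ k ih =>
    have h1 : k + 1 + m = (k + m) + 1 := by omega
    have e1 : S c (k + m + 1) = S c (k + m) + c (k + m) := by
      rw [S, Finset.sum_range_succ]; rfl
    have e2 : S c (k + 1) = S c k + c k := by
      rw [S, Finset.sum_range_succ]; rfl
    rw [h1, e1, ih, hper, e2]; ring

include hper hsum in
lemma cycle_lemma (hm : 0 < m) :
    ∃! t : ℕ, t < m ∧ ∀ k < m, 0 < ∑ j ∈ Finset.range (k + 1), c (t + j) := by
  classical
  -- the filter of minimizers
  have hne : (Finset.range m).Nonempty := ⟨0, Finset.mem_range.mpr hm⟩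
  obtain ⟨t0, ht0m, ht0min⟩ := Finset.exists_min_image (Finset.range m) (S c) hne
  set F : Finset ℕ := (Finset.range m).filter (fun j => ∀ i ∈ Finset.range m, S c j ≤ S c i) with hF
  have hFne : F.Nonempty := ⟨t0, Finset.mem_filter.mpr ⟨ht0m, fun i hi => ht0min i hi⟩⟩
  set t := F.max' hFne with ht
  have htF : t ∈ F := F.max'_mem hFne
  have htm : t < m := by have := (Finset.mem_filter.mp htF).1; simpa using this
  have htmin : ∀ i < m, S c t ≤ S c i := by
    intro i hi
    exact (Finset.mem_filter.mp htF).2 i (by simpa using hi)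
  -- key: all later prefix sums are strictly bigger
  have key : ∀ j, t < j → S c t < S c j := by
    intro j
    induction j using Nat.strong_induction_on with
    | _ j ih =>
      intro htj
      by_cases hjm : j < m
      · rcases lt_or_eq_of_le (htmin j hjm) with h | h
        · exact h
        · exfalso
          have hjF : j ∈ F := by
            refine Finset.mem_filter.mpr ⟨by simpa using hjm, ?_⟩
            intro i hi
            rw [← h]; exact htmin i (by simpa using hi)
          have := Finset.le_max' F j hjF
          omega
      · push_neg at hjm
        have hj : j = (j - m) + m := by omega
        have hS : S c j = S c (j - m) + 1 := by
          have := S_period m c hper hsum (j - m)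
          rw [← hj] at this; exact this
        by_cases h2 : t < j - m
        · have := ih (j - m) (by omega) h2
          omega
        · push_neg at h2
          have := htmin (j - m) (by omega)
          omega
  refine ⟨t, ⟨htm, ?_⟩, ?_⟩
  · intro k hk
    have : S c (t + (k + 1)) = S c t + ∑ j ∈ Finset.range (k + 1), c (t + j) := S_add c t (k+1)
    have h2 := key (t + (k + 1)) (by omega)
    omega
  · -- uniqueness
    intro t' ⟨ht'm, ht'⟩
    by_contra hne'
    have hP : ∀ a b : ℕ, a < m → b < m → a < b →
        (∀ k < m, 0 < ∑ j ∈ Finset.range (k + 1), c (a + j)) →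
        (∀ k < m, 0 < ∑ j ∈ Finset.range (k + 1), c (b + j)) → False := by
      intro a b ham hbm hab hPa hPb
      have h1 := hPa (b - a - 1) (by omega)
      have e1 : a + (b - a - 1 + 1) = b := by omega
      have h1' : 0 < S c b - S c a := by
        have := S_add c a (b - a - 1 + 1)
        rw [e1] at this; omega
      have h2 := hPb (a + m - b - 1) (by omega)
      have e2 : b + (a + m - b - 1 + 1) = a + m := by omega
      have h2' : 0 < S c (a + m) - S c b := by
        have := S_add c b (a + m - b - 1 + 1)
        rw [e2] at this; omega
      have h3 : S c (a + m) = S c a + 1 := S_period m c hper hsum a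
      omega
    rcases Nat.lt_or_ge t t' with h | h
    · exact hP t t' htm ht'm h (fun k hk => by
        have : S c (t + (k+1)) = S c t + ∑ j ∈ Finset.range (k + 1), c (t + j) := S_add c t (k+1)
        have h2 := key (t + (k + 1)) (by omega); omega) ht'
    · have h' : t' < t := by omega
      exact hP t' t ht'm htm h' ht' (fun k hk => by
        have : S c (t + (k+1)) = S c t + ∑ j ∈ Finset.range (k + 1), c (t + j) := S_add c t (k+1)
        have h2 := key (t + (k + 1)) (by omega); omega)
end Cycle

def dcount (n : ℕ) (f : Fin n → ZMod (n+1)) (s : ZMod (n+1)) : ℕ :=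
  (Finset.univ.filter (fun i => f i = s)).card

lemma dcount_shift (n : ℕ) (f : Fin n → ZMod (n+1)) (s x : ZMod (n+1)) :
    dcount n (fun i => f i + s) x = dcount n f (x - s) := by
  unfold dcount
  congr 1
  apply Finset.filter_congr
  intro i _
  simp [eq_sub_iff_add_eq]

def Zpark (n : ℕ) (f : Fin n → ZMod (n+1)) : Prop :=
  ∀ k ≤ n, 0 < ∑ j ∈ Finset.range (k+1), (1 - (dcount n f (-(j : ZMod (n+1))) : ℤ))

lemma sum_dcount (n : ℕ) (f : Fin n → ZMod (n+1)) :
    ∑ x : ZMod (n+1), (dcount n f x : ℤ) = n := by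
  have h := Finset.card_eq_sum_card_fiberwise
    (f := f) (s := Finset.univ) (t := Finset.univ) (fun x _ => Finset.mem_univ _)
  have h3 : ∑ x : ZMod (n+1), dcount n f x = n := by
    unfold dcount
    rw [← h]
    simp
  have : ∑ x : ZMod (n+1), (dcount n f x : ℤ) =
      ((∑ x : ZMod (n+1), dcount n f x : ℕ) : ℤ) := by push_cast; rfl
  rw [this, h3]

lemma sum_range_zmod (n : ℕ) (h : ZMod (n+1) → ℤ) :
    ∑ j ∈ Finset.range (n+1), h ((j : ℕ) : ZMod (n+1)) = ∑ x : ZMod (n+1), h x := by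
  apply Finset.sum_nbij' (i := fun j => ((j : ℕ) : ZMod (n+1))) (j := fun x => ZMod.val x)
  · intro a _; exact Finset.mem_univ _
  · intro x _; exact Finset.mem_range.mpr (ZMod.val_lt x)
  · intro a ha; exact ZMod.val_cast_of_lt (Finset.mem_range.mp ha)
  · intro x _; exact ZMod.natCast_rightInverse x
  · intro a _; rfl

lemma exists_unique_shift (n : ℕ) (f : Fin n → ZMod (n+1)) :
    ∃! s : ZMod (n+1), Zpark n (fun i => f i + s) := by
  classical
  set c : ℕ → ℤ := fun j => 1 - (dcount n f (-(j : ZMod (n+1))) : ℤ) with hc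
  have hper : ∀ j, c (j + (n+1)) = c j := by
    intro j
    simp only [hc]
    congr 2
    push_cast
    simp
  have hsum : ∑ j ∈ Finset.range (n+1), c j = 1 := by
    have h1 : ∑ j ∈ Finset.range (n+1), c j
        = ∑ x : ZMod (n+1), (1 - (dcount n f (-x) : ℤ)) :=
      sum_range_zmod n (fun x => 1 - (dcount n f (-x) : ℤ))
    have h2 : ∑ x : ZMod (n+1), (1 - (dcount n f (-x) : ℤ))
        = ∑ x : ZMod (n+1), (1 - (dcount n f x : ℤ)) :=
      Equiv.sum_comp (Equiv.neg (ZMod (n+1))) (fun x => 1 - (dcount n f x : ℤ))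
    rw [h1, h2, Finset.sum_sub_distrib, sum_dcount]
    simp
  obtain ⟨t, ⟨htm, ht⟩, huniq⟩ := cycle_lemma (n+1) c hper hsum (Nat.succ_pos n)
  -- the shifted dcount identity
  have hshift : ∀ (s : ZMod (n+1)) (k : ℕ),
      ∑ j ∈ Finset.range (k+1), (1 - (dcount n (fun i => f i + s) (-(j : ZMod (n+1))) : ℤ))
      = ∑ j ∈ Finset.range (k+1), c (s.val + j) := by
    intro s k
    apply Finset.sum_congr rfl
    intro j _
    rw [dcount_shift]
    simp only [hc]
    congr 3
    have hsv : ((s.val : ℕ) : ZMod (n+1)) = s := ZMod.natCast_rightInverse s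
    push_cast
    rw [hsv]
    ring
  have hZiff : ∀ s : ZMod (n+1), Zpark n (fun i => f i + s) ↔
      ∀ k < (n+1), 0 < ∑ j ∈ Finset.range (k+1), c (s.val + j) := by
    intro s
    unfold Zpark
    refine ⟨fun h k hk => ?_, fun h k hk => ?_⟩
    · rw [← hshift s k]; exact h k (by omega)
    · rw [hshift s k]; exact h k (by omega)
  refine ⟨((t : ℕ) : ZMod (n+1)), ?_, ?_⟩
  · show Zpark n fun i => f i + ((t : ℕ) : ZMod (n+1))
    rw [hZiff]
    rw [ZMod.val_cast_of_lt htm]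
    exact ht
  · intro s hs
    rw [hZiff] at hs
    have := huniq s.val ⟨ZMod.val_lt s, hs⟩
    rw [← this]
    exact (ZMod.natCast_rightInverse s).symm

def countLE (n : ℕ) (α : Fin n → ℕ) (k : ℕ) : ℕ :=
  (Finset.univ.filter (fun i => α i ≤ k)).card

lemma card_val_lt (n k : ℕ) (hk : k ≤ n) :
    (Finset.univ.filter (fun j : Fin n => (j : ℕ) < k)).card = k := by
  rw [← Finset.card_range k]
  apply Finset.card_bij (fun (j : Fin n) _ => (j : ℕ))
  · intro a ha; simp at ha ⊢; omega
  · intro a ha b hb h; exact Fin.val_injective h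
  · intro a ha
    simp at ha
    exact ⟨⟨a, by omega⟩, by simpa using ha⟩

lemma filter_perm_card (n : ℕ) (σ : Equiv.Perm (Fin n)) (p : Fin n → Prop) [DecidablePred p] :
    (Finset.univ.filter (fun j => p (σ j))).card = (Finset.univ.filter p).card := by
  rw [Finset.card_filter, Finset.card_filter]
  exact Equiv.sum_comp σ (fun i => if p i then 1 else 0)

lemma parking_iff_count (n : ℕ) (α : Fin n → ℕ) :
    IsParkingFunction n α ↔
      (∀ i, 1 ≤ α i ∧ α i ≤ n) ∧ ∀ k ≤ n, k ≤ countLE n α k := by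
  constructor
  · rintro ⟨hb, σ, hmono, hle⟩
    refine ⟨hb, fun k hk => ?_⟩
    have h1 : (Finset.univ.filter (fun j : Fin n => (j : ℕ) < k)) ⊆
        (Finset.univ.filter (fun j => α (σ j) ≤ k)) := by
      intro j hj
      simp at hj ⊢
      have := hle j
      omega
    calc k = (Finset.univ.filter (fun j : Fin n => (j : ℕ) < k)).card :=
            (card_val_lt n k hk).symm
      _ ≤ (Finset.univ.filter (fun j => α (σ j) ≤ k)).card := Finset.card_le_card h1
      _ = countLE n α k := filter_perm_card n σ (fun i => α i ≤ k)
  · rintro ⟨hb, hcount⟩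
    refine ⟨hb, Tuple.sort α, fun i j hij => Tuple.monotone_sort α hij, ?_⟩
    intro i
    by_contra hcon
    push_neg at hcon
    have hk := hcount ((i : ℕ) + 1) i.isLt
    have h2 : countLE n α ((i : ℕ) + 1) =
        (Finset.univ.filter (fun j => α (Tuple.sort α j) ≤ (i : ℕ) + 1)).card :=
      (filter_perm_card n (Tuple.sort α) (fun x => α x ≤ (i : ℕ) + 1)).symm
    have h3 : (Finset.univ.filter (fun j => α (Tuple.sort α j) ≤ (i : ℕ) + 1)) ⊆
        (Finset.univ.filter (fun j : Fin n => (j : ℕ) < (i : ℕ))) := by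
      intro j hj
      simp at hj ⊢
      by_contra hji
      push_neg at hji
      have : α (Tuple.sort α i) ≤ α (Tuple.sort α j) :=
        Tuple.monotone_sort α (show i ≤ j from by rwa [Fin.le_def])
      omega
    have h4 := Finset.card_le_card h3
    rw [card_val_lt n (i : ℕ) (le_of_lt i.isLt)] at h4
    omega

lemma arc_iff (n l j : ℕ) (hl : l ≤ n) (hj : j ≤ l) (a : ℕ) (ha1 : 1 ≤ a) (ha2 : a ≤ n) :
    ((a : ZMod (n+1)) = -(j : ZMod (n+1))) ↔ (n - l < a ∧ n + 1 - a = j) := by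
  constructor
  · intro h
    have hd : ((a + j : ℕ) : ZMod (n+1)) = 0 := by
      push_cast
      rw [h]; ring
    have hdvd : (n + 1) ∣ (a + j) := (ZMod.natCast_eq_zero_iff _ _).mp hd
    have haj : a + j = n + 1 := by
      rcases hdvd with ⟨c, hc⟩
      rcases c with _ | _ | c
      · omega
      · omega
      · exfalso
        have h5 : (n+1) * (c+1+1) ≥ 2*n+2 := by nlinarith
        omega
    omega
  · rintro ⟨h1, h2⟩
    have haj : a + j = n + 1 := by omega
    have : ((a : ZMod (n+1)) + (j : ZMod (n+1))) = 0 := by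
      have : ((a + j : ℕ) : ZMod (n+1)) = ((n + 1 : ℕ) : ZMod (n+1)) := by rw [haj]
      push_cast at this
      simpa using this
    exact eq_neg_of_add_eq_zero_left this

lemma arc_sum (n l : ℕ) (hl : l ≤ n) (α : Fin n → ℕ) (hb : ∀ i, 1 ≤ α i ∧ α i ≤ n) :
    ∑ j ∈ Finset.range (l+1), dcount n (fun i => (α i : ZMod (n+1))) (-(j : ZMod (n+1)))
      + countLE n α (n - l) = n := by
  classical
  have hcard : (Finset.univ.filter (fun i : Fin n => n - l < α i)).card
      = ∑ j ∈ Finset.range (l+1),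
        dcount n (fun i => (α i : ZMod (n+1))) (-(j : ZMod (n+1))) := by
    rw [Finset.card_eq_sum_card_fiberwise
      (f := fun i => n + 1 - α i) (s := Finset.univ.filter (fun i : Fin n => n - l < α i)) (t := Finset.range (l+1))
      (fun i hi => by
        simp only [Finset.coe_filter, Finset.mem_coe, Set.mem_setOf_eq, Finset.mem_filter, Finset.mem_univ, true_and] at hi
        simp only [Finset.mem_coe, Finset.mem_range]
        have := hb i
        omega)]
    apply Finset.sum_congr rfl
    intro j hj
    unfold dcount
    congr 1
    ext i
    have hbi := hb i
    simp only [Finset.mem_filter, Finset.mem_univ, true_and]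
    rw [arc_iff n l j hl (Nat.lt_succ_iff.mp (Finset.mem_range.mp hj)) (α i) hbi.1 hbi.2]
  have hsplit := Finset.card_filter_add_card_filter_not
    (s := (Finset.univ : Finset (Fin n))) (p := fun i : Fin n => α i ≤ n - l)
  have hneg : (Finset.univ.filter (fun i : Fin n => ¬ (α i ≤ n - l)))
      = (Finset.univ.filter (fun i : Fin n => n - l < α i)) := by
    apply Finset.filter_congr
    intro i _
    exact not_le
  rw [hneg] at hsplit
  simp only [Finset.card_univ, Fintype.card_fin] at hsplit
  unfold countLE
  omega

lemma count_iff_zpark (n : ℕ) (α : Fin n → ℕ) (hb : ∀ i, 1 ≤ α i ∧ α i ≤ n) :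
    (∀ k ≤ n, k ≤ countLE n α k) ↔ Zpark n (fun i => (α i : ZMod (n+1))) := by
  have hsum : ∀ l, ∑ j ∈ Finset.range (l+1),
      (1 - (dcount n (fun i => (α i : ZMod (n+1))) (-(j : ZMod (n+1))) : ℤ))
      = ((l : ℤ) + 1) - ((∑ j ∈ Finset.range (l+1),
          dcount n (fun i => (α i : ZMod (n+1))) (-(j : ZMod (n+1))) : ℕ) : ℤ) := by
    intro l
    rw [Finset.sum_sub_distrib]
    push_cast
    simp
  constructor
  · intro h l hl
    have h1 := arc_sum n l hl α hb
    have h2 := h (n - l) (by omega)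
    rw [hsum]
    omega
  · intro h k hk
    rcases Nat.eq_zero_or_pos k with hk0 | hk0
    · omega
    · have hl : n - k ≤ n := by omega
      have h1 := arc_sum n (n - k) hl α hb
      have h2 := h (n - k) hl
      rw [hsum] at h2
      have hnk : n - (n - k) = k := by omega
      rw [hnk] at h1
      omega

lemma parking_iff_zpark (n : ℕ) (α : Fin n → ℕ) (hb : ∀ i, 1 ≤ α i ∧ α i ≤ n) :
    IsParkingFunction n α ↔ Zpark n (fun i => (α i : ZMod (n+1))) := by
  rw [parking_iff_count, count_iff_zpark n α hb]
  exact and_iff_right hb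

lemma zpark_val (n : ℕ) (f : Fin n → ZMod (n+1)) (h : Zpark n f) (i : Fin n) :
    1 ≤ (f i).val ∧ (f i).val ≤ n := by
  have h0 := h 0 (Nat.zero_le n)
  have h0' : (dcount n f 0 : ℤ) < 1 := by
    rw [Finset.sum_range_succ, Finset.sum_range_zero] at h0
    simp only [Nat.cast_zero, neg_zero, zero_add] at h0
    omega
  have hd0 : dcount n f 0 = 0 := by omega
  have hne : f i ≠ 0 := by
    intro hfi
    have : 0 < dcount n f 0 := Finset.card_pos.mpr ⟨i, by simp [dcount, hfi]⟩
    omega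
  have hlt := ZMod.val_lt (f i)
  have hv : (f i).val ≠ 0 := fun hv => hne ((ZMod.val_eq_zero _).mp hv)
  omega


/-- The number of parking functions of length `n` is `(n+1)^(n-1)`. -/
theorem card_parkingFunctions (n : ℕ) (hn : 1 ≤ n) :
    Nat.card {α : Fin n → ℕ // IsParkingFunction n α} = (n + 1) ^ (n - 1) := by
  classical
  set Φ : {α : Fin n → ℕ // IsParkingFunction n α} × ZMod (n+1) → (Fin n → ZMod (n+1)) :=
    fun p i => ((p.1.1 i : ℕ) : ZMod (n+1)) + p.2 with hΦ
  have hbij : Function.Bijective Φ := by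
    constructor
    · rintro ⟨⟨α, hα⟩, c⟩ ⟨⟨β, hβ⟩, c'⟩ h
      simp only [hΦ] at h
      have hpt : ∀ i, ((α i : ℕ) : ZMod (n+1)) + c = ((β i : ℕ) : ZMod (n+1)) + c' :=
        fun i => congrFun h i
      obtain ⟨s, -, huniq⟩ := exists_unique_shift n (fun i => ((α i : ℕ) : ZMod (n+1)) + c)
      have hZα : Zpark n (fun i => (((α i : ℕ) : ZMod (n+1)) + c) + (-c)) := by
        have he : (fun i => (((α i : ℕ) : ZMod (n+1)) + c) + (-c))
            = fun i => ((α i : ℕ) : ZMod (n+1)) := by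
          funext i; ring
        rw [he]; exact (parking_iff_zpark n α hα.1).mp hα
      have hZβ : Zpark n (fun i => (((α i : ℕ) : ZMod (n+1)) + c) + (-c')) := by
        have he : (fun i => (((α i : ℕ) : ZMod (n+1)) + c) + (-c'))
            = fun i => ((β i : ℕ) : ZMod (n+1)) := by
          funext i; rw [hpt i]; ring
        rw [he]; exact (parking_iff_zpark n β hβ.1).mp hβ
      have hcc' : c = c' := by
        have h5 := (huniq (-c) hZα).trans (huniq (-c') hZβ).symm
        have := congrArg Neg.neg h5
        simpa using this
      have hαβ : α = β := by
        funext i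
        have hpt2 : ((α i : ℕ) : ZMod (n+1)) = ((β i : ℕ) : ZMod (n+1)) := by
          have h6 := hpt i
          rw [hcc'] at h6
          exact add_right_cancel h6
        have h1 : ((α i : ℕ) : ZMod (n+1)).val = α i :=
          ZMod.val_cast_of_lt (by have := (hα.1 i).2; omega)
        have h2 : ((β i : ℕ) : ZMod (n+1)).val = β i :=
          ZMod.val_cast_of_lt (by have := (hβ.1 i).2; omega)
        rw [← h1, ← h2, hpt2]
      subst hαβ hcc'
      rfl
    · intro f
      obtain ⟨s, hs, -⟩ := exists_unique_shift n f
      set α : Fin n → ℕ := fun i => (f i + s).val with hα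
      have hb : ∀ i, 1 ≤ α i ∧ α i ≤ n := fun i => zpark_val n _ hs i
      have hcast : (fun i => ((α i : ℕ) : ZMod (n+1))) = fun i => f i + s := by
        funext i
        exact ZMod.natCast_rightInverse (f i + s)
      have hpark : IsParkingFunction n α := by
        rw [parking_iff_zpark n α hb, hcast]
        exact hs
      refine ⟨⟨⟨α, hpark⟩, -s⟩, ?_⟩
      funext i
      simp only [hΦ]
      rw [congrFun hcast i]
      ring
  have hcard := Nat.card_eq_of_bijective Φ hbij
  rw [Nat.card_prod] at hcard
  have h1 : Nat.card (ZMod (n+1)) = n + 1 := by simp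
  have h2 : Nat.card (Fin n → ZMod (n+1)) = (n+1)^n := by
    rw [Nat.card_eq_fintype_card]
    simp
  rw [h1, h2] at hcard
  have h3 : (n+1)^n = (n+1)^(n-1) * (n+1) := by
    rw [← pow_succ]
    congr 1
    omega
  rw [h3] at hcard
  exact Nat.eq_of_mul_eq_mul_right (by omega) hcard
end

section
/- For every n >= 1, the number of unit interval parking functions of length n equals the n-th Fubini number, i.e., the number of ordered set partitions of [n]. -/
/-- The Fubini numbers (numbers of ordered set partitions of `[n]`):
`Fub 0 = 1` and `Fub n = ∑_{k=1}^n C(n,k) * Fub (n-k)`. -/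
def Fub : ℕ → ℕ
  | 0 => 1
  | n + 1 => ∑ k ∈ Finset.range (n + 1), Nat.choose (n + 1) (k + 1) * Fub (n - k)
decreasing_by exact Nat.lt_succ_of_le (Nat.sub_le n k)

def IsParkingOutcome (n : ℕ) (α : Fin n → ℕ) (spot : Fin n → Fin n) : Prop :=
  Function.Bijective spot ∧
    ∀ i : Fin n,
      α i ≤ (spot i : ℕ) + 1 ∧
      ∀ s : Fin n, α i ≤ (s : ℕ) + 1 → (s : ℕ) < (spot i : ℕ) →
        ∃ j : Fin n, j < i ∧ spot j = s

/-- A unit interval parking function: a parking function in which every car parks in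
its preferred spot or in the spot immediately after it. -/
def IsUnitIntervalPF (n : ℕ) (α : Fin n → ℕ) : Prop :=
  (∀ i, 1 ≤ α i ∧ α i ≤ n) ∧
    ∃ spot : Fin n → Fin n, IsParkingOutcome n α spot ∧ ∀ i, (spot i : ℕ) ≤ α i

open Finset

def Rk {β : Type*} [Fintype β] (c : β → ℕ) : Prop :=
  ∀ i, c i = #(univ.filter (fun j => c j < c i))

section
set_option linter.unusedSectionVars false
variable {β : Type*} [Fintype β] [DecidableEq β] {c : β → ℕ}

lemma zeroset_nonempty [Nonempty β] (h : Rk c) :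
    (univ.filter (fun j => c j = 0)).Nonempty := by
  obtain ⟨i, -, hi⟩ := Finset.exists_min_image univ c univ_nonempty
  refine ⟨i, ?_⟩
  have : c i = 0 := by
    rw [h i, Finset.card_eq_zero, Finset.filter_eq_empty_iff]
    intro j _
    exact not_lt.2 (hi j (mem_univ j))
  simp [this]

lemma zeroset_le (h : Rk c) {S : Finset β} (hS0 : ∀ x, x ∈ S ↔ c x = 0)
    {x : β} (hx : c x ≠ 0) : #S ≤ c x := by
  rw [h x]
  apply Finset.card_le_card
  intro j hj
  have := (hS0 j).1 hj
  simp only [mem_filter, mem_univ, true_and]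
  omega

lemma card_subtype_filter {S : Finset β} (p : β → Prop) [DecidablePred p] :
    #(univ.filter (fun j : {x : β // x ∉ S} => p j.1))
      = #(univ.filter (fun j : β => j ∉ S ∧ p j)) := by
  apply Finset.card_bij (fun j _ => j.1)
  · intro a ha; simp at ha ⊢; exact ⟨a.2, ha⟩
  · intro a _ b _ hab; exact Subtype.ext hab
  · intro b hb
    simp only [mem_filter, mem_univ, true_and] at hb
    exact ⟨⟨b, hb.1⟩, by simp [hb.2], rfl⟩

lemma rk_restrict (h : Rk c) (S : Finset β) (hS0 : ∀ x, x ∈ S ↔ c x = 0) :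
    Rk (fun x : {x : β // x ∉ S} => c x.1 - #S) := by
  intro x
  have hx : c x.1 ≠ 0 := fun h0 => x.2 ((hS0 x.1).2 h0)
  have hkx : #S ≤ c x.1 := zeroset_le h hS0 hx
  dsimp only
  rw [card_subtype_filter (S := S) (fun j : β => c j - #S < c x.1 - #S)]
  have he : univ.filter (fun j : β => j ∉ S ∧ c j - #S < c x.1 - #S)
      = univ.filter (fun j : β => ¬ c j = 0 ∧ c j < c x.1) := by
    apply Finset.filter_congr
    intro j _
    have hj0 : j ∉ S ↔ ¬ c j = 0 := by rw [hS0 j]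
    constructor
    · rintro ⟨h1, h2⟩
      have := zeroset_le h hS0 (hj0.1 h1)
      exact ⟨hj0.1 h1, by omega⟩
    · rintro ⟨h1, h2⟩
      have := zeroset_le h hS0 h1
      exact ⟨hj0.2 h1, by omega⟩
  rw [he]
  have hsplit := Finset.card_filter_add_card_filter_not
    (s := univ.filter (fun j : β => c j < c x.1)) (p := fun j => c j = 0)
  rw [Finset.filter_filter, Finset.filter_filter] at hsplit
  have h1 : univ.filter (fun j : β => c j < c x.1 ∧ c j = 0) = S := by
    apply Finset.ext; intro j
    simp only [mem_filter, mem_univ, true_and, hS0 j]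
    omega
  have h2 : univ.filter (fun j : β => c j < c x.1 ∧ ¬ c j = 0)
      = univ.filter (fun j : β => ¬ c j = 0 ∧ c j < c x.1) := by
    apply Finset.filter_congr; intro j _; tauto
  rw [h1, h2] at hsplit
  have := h x.1
  omega

lemma rk_extend (S : Finset β) (hS : S.Nonempty) (c' : {x : β // x ∉ S} → ℕ)
    (hc' : Rk c') :
    Rk (fun x : β => if h : x ∈ S then 0 else c' ⟨x, h⟩ + #S) := by
  set c : β → ℕ := fun x : β => if h : x ∈ S then 0 else c' ⟨x, h⟩ + #S with hc
  have hmem : ∀ x (hx : x ∉ S), c x = c' ⟨x, hx⟩ + #S := by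
    intro x hx; simp [hc, dif_neg hx]
  have hmem0 : ∀ x, x ∈ S → c x = 0 := by intro x hx; simp [hc, dif_pos hx]
  intro x
  by_cases hx : x ∈ S
  · rw [hmem0 x hx]
    symm
    rw [Finset.card_eq_zero, Finset.filter_eq_empty_iff]
    intro j _
    omega
  · have hkey : univ.filter (fun j : β => c j < c x)
        = S ∪ univ.filter (fun j : β => j ∉ S ∧ c j < c x) := by
      apply Finset.ext; intro j
      simp only [mem_filter, mem_univ, true_and, Finset.mem_union]
      by_cases hj : j ∈ S
      · have h1 : 1 ≤ #S := Finset.card_pos.2 hS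
        have := hmem0 j hj
        have := hmem x hx
        constructor
        · intro _; exact Or.inl hj
        · intro _; omega
      · constructor
        · intro h2; exact Or.inr ⟨hj, h2⟩
        · rintro (h2 | ⟨-, h2⟩); exact absurd h2 hj; exact h2
    have hsub : #(univ.filter (fun j : β => j ∉ S ∧ c j < c x))
        = #(univ.filter (fun j : {y : β // y ∉ S} => c j.1 < c x)) :=
      (card_subtype_filter (S := S) (fun j : β => c j < c x)).symm
    have hsub2 : univ.filter (fun j : {y : β // y ∉ S} => c j.1 < c x)
        = univ.filter (fun j : {y : β // y ∉ S} => c' j < c' ⟨x, hx⟩) := by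
      apply Finset.filter_congr
      intro j _
      rw [hmem j.1 j.2, hmem x hx, Subtype.coe_eta]
      omega
    have hdisj : Disjoint S (univ.filter (fun j : β => j ∉ S ∧ c j < c x)) := by
      rw [Finset.disjoint_left]
      intro a ha ha2
      simp only [mem_filter] at ha2
      exact ha2.2.1 ha
    rw [hkey, Finset.card_union_of_disjoint hdisj, hsub, hsub2, ← hc' ⟨x, hx⟩,
      hmem x hx]
    omega
end

instance rk_finite (β : Type*) [Fintype β] : Finite {c : β → ℕ // Rk c} := by
  have hb : ∀ (x : {c : β → ℕ // Rk c}) (i : β), x.1 i < Fintype.card β := by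
    intro x i
    rw [x.2 i, Fintype.card]
    apply Finset.card_lt_card
    refine ⟨Finset.subset_univ _, fun hs => ?_⟩
    have := hs (mem_univ i)
    simp at this
  refine Finite.of_injective
    (fun x => (fun i => (⟨x.1 i, hb x i⟩ : Fin (Fintype.card β)))) ?_
  intro x y hxy
  apply Subtype.ext
  funext i
  have := congrFun hxy i
  simpa [Fin.ext_iff] using this

lemma rk_comp {β γ : Type*} [Fintype β] [Fintype γ] (e : γ ≃ β) {c : β → ℕ} (h : Rk c) :
    Rk (c ∘ e) := by
  intro i
  have h2 : #(univ.filter (fun j : γ => c (e j) < c (e i)))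
      = #(univ.filter (fun j : β => c j < c (e i))) := by
    apply Finset.card_bij (fun j _ => e j)
    · intro a ha; simp at ha ⊢; exact ha
    · intro a _ b _ hab; exact e.injective hab
    · intro b hb; exact ⟨e.symm b, by simpa using hb, by simp⟩
  simpa [h2] using h (e i)

def rkEquiv {β γ : Type*} [Fintype β] [Fintype γ] (e : γ ≃ β) :
    {c : β → ℕ // Rk c} ≃ {c : γ → ℕ // Rk c} where
  toFun x := ⟨x.1 ∘ e, rk_comp e x.2⟩
  invFun x := ⟨x.1 ∘ e.symm, by simpa using rk_comp e.symm x.2⟩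
  left_inv x := by ext i; simp
  right_inv x := by ext i; simp

section
set_option linter.unusedSectionVars false
variable {β : Type*} [Fintype β] [DecidableEq β]

noncomputable def rkDecomp1 [Nonempty β] :
    {c : β → ℕ // Rk c} ≃
      Σ S : {S : Finset β // S.Nonempty},
        {c : β → ℕ // Rk c ∧ univ.filter (fun j => c j = 0) = S.1} where
  toFun x := ⟨⟨univ.filter (fun j => x.1 j = 0), zeroset_nonempty x.2⟩,
    ⟨x.1, x.2, rfl⟩⟩
  invFun p := ⟨p.2.1, p.2.2.1⟩
  left_inv x := rfl
  right_inv p := by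
    obtain ⟨⟨S, hS⟩, c, hrk, hzs⟩ := p
    refine Sigma.ext (Subtype.ext hzs) ?_
    refine (Subtype.heq_iff_coe_eq ?_).2 rfl
    intro z
    refine and_congr_right fun _ => ?_
    have hzs' : filter (fun j => c j = 0) univ = S := hzs
    show filter (fun j => z j = 0) univ = filter (fun j => c j = 0) univ
      ↔ filter (fun j => z j = 0) univ = S
    rw [hzs']

def rkDecomp2 (S : Finset β) (hS : S.Nonempty) :
    {c : β → ℕ // Rk c ∧ univ.filter (fun j => c j = 0) = S} ≃
      {c : {x : β // x ∉ S} → ℕ // Rk c} where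
  toFun x := ⟨fun y => x.1 y.1 - #S,
    rk_restrict x.2.1 S (fun z => by
      obtain ⟨c, hrk, hzs⟩ := x
      show z ∈ S ↔ c z = 0
      rw [← hzs]; simp)⟩
  invFun x := ⟨fun z => if h : z ∈ S then 0 else x.1 ⟨z, h⟩ + #S,
    rk_extend S hS x.1 x.2, by
      have h1 : 1 ≤ #S := Finset.card_pos.2 hS
      apply Finset.ext; intro z
      simp only [mem_filter, mem_univ, true_and]
      by_cases hz : z ∈ S
      · simp [hz]
      · rw [dif_neg hz]
        simp only [hz, iff_false]
        exact (Nat.add_pos_right _ h1).ne'⟩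
  left_inv x := by
    obtain ⟨c, hrk, hzs⟩ := x
    apply Subtype.ext
    funext z
    have hS0 : ∀ t, t ∈ S ↔ c t = 0 := fun t => by
      rw [show (t ∈ S) = (t ∈ filter (fun j => c j = 0) univ) from by rw [hzs]]
      simp
    dsimp only
    by_cases hz : z ∈ S
    · rw [dif_pos hz]; exact ((hS0 z).1 hz).symm
    · rw [dif_neg hz]
      have := zeroset_le hrk hS0 ((hS0 z).not.1 hz)
      omega
  right_inv x := by
    apply Subtype.ext
    funext y
    dsimp only
    rw [dif_neg y.2, Subtype.coe_eta]
    omega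
end

noncomputable def gRk (m : ℕ) : ℕ := Nat.card {c : Fin m → ℕ // Rk c}

lemma card_rk_eq (β : Type*) [Fintype β] :
    Nat.card {c : β → ℕ // Rk c} = gRk (Fintype.card β) :=
  Nat.card_congr (rkEquiv (Fintype.equivFin β).symm)

lemma gRk_zero : gRk 0 = 1 := by
  have : Unique {c : Fin 0 → ℕ // Rk c} := by
    refine ⟨⟨⟨fun i => i.elim0, fun i => i.elim0⟩⟩, ?_⟩
    rintro ⟨c, hc⟩
    apply Subtype.ext
    funext i
    exact i.elim0
  simp [gRk, Nat.card_unique]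


lemma nat_card_sigma {ι : Type*} [Fintype ι] (f : ι → Type*) [∀ i, Finite (f i)] :
    Nat.card (Σ i, f i) = ∑ i, Nat.card (f i) := by
  letI : ∀ i, Fintype (f i) := fun i => Fintype.ofFinite _
  simp [Nat.card_eq_fintype_card, Fintype.card_sigma]

lemma gRk_card_compl {β : Type*} [Fintype β] [DecidableEq β] (S : Finset β) :
    Nat.card {c : {x : β // x ∉ S} → ℕ // Rk c} = gRk (Fintype.card β - #S) := by
  rw [card_rk_eq]
  congr 1
  rw [Fintype.card_subtype_compl, Fintype.card_coe]

noncomputable def phiAux (n m : ℕ) : ℕ := if m = 0 then 0 else gRk (n + 1 - m)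

lemma gRk_succ (n : ℕ) :
    gRk (n + 1) = ∑ k ∈ Finset.range (n + 1), Nat.choose (n + 1) (k + 1) * gRk (n - k) := by
  have step1 : gRk (n + 1)
      = ∑ S : {S : Finset (Fin (n + 1)) // S.Nonempty}, gRk (n + 1 - #S.1) := by
    rw [gRk, Nat.card_congr (rkDecomp1 (β := Fin (n + 1))),
      Nat.card_congr (Equiv.sigmaCongrRight
        (fun S : {S : Finset (Fin (n + 1)) // S.Nonempty} => rkDecomp2 S.1 S.2)),
      nat_card_sigma]
    refine Finset.sum_congr rfl fun S _ => ?_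
    rw [gRk_card_compl, Fintype.card_fin]
  have step2 : ∑ S : {S : Finset (Fin (n + 1)) // S.Nonempty}, gRk (n + 1 - #S.1)
      = ∑ S ∈ univ.filter (fun S : Finset (Fin (n + 1)) => S.Nonempty), gRk (n + 1 - #S) := by
    exact (Finset.sum_subtype (p := fun S : Finset (Fin (n + 1)) => S.Nonempty)
      (f := fun S => gRk (n + 1 - #S))
      (univ.filter fun S : Finset (Fin (n + 1)) => S.Nonempty)
      (fun x => by simp)).symm
  have step3 : ∑ S ∈ univ.filter (fun S : Finset (Fin (n + 1)) => S.Nonempty), gRk (n + 1 - #S)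
      = ∑ S : Finset (Fin (n + 1)), phiAux n #S := by
    rw [← Finset.sum_filter_add_sum_filter_not univ
      (fun S : Finset (Fin (n + 1)) => S.Nonempty) (fun S => phiAux n #S)]
    have hz : ∑ S ∈ univ.filter (fun S : Finset (Fin (n + 1)) => ¬S.Nonempty), phiAux n #S = 0 := by
      apply Finset.sum_eq_zero
      intro S hS
      simp only [mem_filter, Finset.not_nonempty_iff_eq_empty] at hS
      simp [phiAux, hS.2]
    rw [hz, add_zero]
    refine Finset.sum_congr rfl fun S hS => ?_
    rw [mem_filter] at hS
    have h2 : #S ≠ 0 := by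
      have h3 : 0 < #S := Finset.card_pos.2 hS.2
      omega
    simp [phiAux, h2]
  have step4 : ∑ S : Finset (Fin (n + 1)), phiAux n #S
      = ∑ m ∈ Finset.range (n + 2), Nat.choose (n + 1) m * phiAux n m := by
    rw [show (univ : Finset (Finset (Fin (n + 1)))) = Finset.powerset univ from
      Finset.powerset_univ.symm]
    rw [Finset.sum_powerset_apply_card]
    simp [Finset.card_univ]
  rw [step1, step2, step3, step4, Finset.sum_range_succ']
  have h0 : phiAux n 0 = 0 := by simp [phiAux]
  have hsucc : ∀ k, phiAux n (k + 1) = gRk (n - k) := by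
    intro k
    simp only [phiAux, Nat.succ_ne_zero, if_false]
    congr 1
    omega
  rw [h0, mul_zero, add_zero]
  exact Finset.sum_congr rfl fun k _ => by rw [hsucc]

theorem gRk_eq_Fub : ∀ n, gRk n = Fub n := by
  intro n
  induction n using Nat.strong_induction_on with
  | _ n ih =>
    match n with
    | 0 => rw [gRk_zero, Fub]
    | n + 1 =>
      rw [gRk_succ, Fub]
      refine Finset.sum_congr rfl fun k hk => ?_
      rw [ih (n - k) (by omega)]


section PartA
variable {n : ℕ}

/-- number of earlier cars with the same rank -/
def rnk (c : Fin n → ℕ) (i : Fin n) : ℕ := #(univ.filter (fun j => c j = c i ∧ j < i))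

/-- the parking function associated to a ranking -/
def PhiF (c : Fin n → ℕ) (i : Fin n) : ℕ := c i + 1 + (rnk c i - 1)

lemma rnk_lt_fiber (c : Fin n → ℕ) (i : Fin n) :
    rnk c i + 1 ≤ #(univ.filter (fun j => c j = c i)) := by
  have h1 : univ.filter (fun j => c j = c i ∧ j < i) ∪ {i}
      ⊆ univ.filter (fun j => c j = c i) := by
    intro j hj
    rcases Finset.mem_union.1 hj with hj | hj
    · simp only [mem_filter] at hj ⊢; exact ⟨hj.1, hj.2.1⟩
    · simp only [Finset.mem_singleton] at hj; subst hj; simp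
  have h2 := Finset.card_le_card h1
  rw [Finset.card_union_of_disjoint (by
    simp only [Finset.disjoint_singleton_right, mem_filter]
    rintro ⟨-, -, h⟩
    exact lt_irrefl _ h)] at h2
  simpa [rnk] using h2

lemma rk_lt_step {c : Fin n → ℕ} (h : Rk c) {i j : Fin n} (hij : c i < c j) :
    c i + rnk c i + 1 ≤ c j := by
  have h1 : univ.filter (fun k => c k < c i) ∪ univ.filter (fun k => c k = c i)
      ⊆ univ.filter (fun k => c k < c j) := by
    intro k hk
    rcases Finset.mem_union.1 hk with hk | hk <;>
      simp only [mem_filter, mem_univ, true_and] at hk ⊢ <;> omega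
  have h2 := Finset.card_le_card h1
  rw [Finset.card_union_of_disjoint (by
    rw [Finset.disjoint_left]
    intro a ha ha2
    simp only [mem_filter, mem_univ, true_and] at ha ha2
    omega)] at h2
  have h3 := rnk_lt_fiber c i
  rw [← h i, ← h j] at h2
  omega

lemma spotN_lt {c : Fin n → ℕ} (h : Rk c) (i : Fin n) : c i + rnk c i < n := by
  have h1 : univ.filter (fun k => c k < c i) ∪ univ.filter (fun j => c j = c i ∧ j < i)
      ⊆ univ.erase i := by
    intro k hk
    rcases Finset.mem_union.1 hk with hk | hk <;>
      simp only [mem_filter, mem_univ, true_and] at hk <;>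
      simp only [Finset.mem_erase, mem_univ, and_true]
    · intro he; subst he; omega
    · intro he; subst he; exact absurd hk.2 (lt_irrefl _)
  have h2 := Finset.card_le_card h1
  rw [Finset.card_union_of_disjoint (by
    rw [Finset.disjoint_left]
    intro a ha ha2
    simp only [mem_filter, mem_univ, true_and] at ha ha2
    omega)] at h2
  rw [Finset.card_erase_of_mem (mem_univ i), Finset.card_univ, Fintype.card_fin] at h2
  rw [← h i] at h2
  have : 0 < n := Nat.pos_of_ne_zero (fun h0 => (h0 ▸ i).elim0)
  simp only [rnk] at h2 ⊢
  omega

lemma spotN_inj {c : Fin n → ℕ} (h : Rk c) {i j : Fin n}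
    (hij : c i + rnk c i = c j + rnk c j) : i = j := by
  by_contra hne
  -- wlog on c i vs c j
  rcases Nat.lt_trichotomy (c i) (c j) with hc | hc | hc
  · have := rk_lt_step h hc; omega
  · -- same rank: rnk differ
    have hr : rnk c i = rnk c j := by omega
    rcases Fin.lt_or_lt_of_ne hne with hlt | hlt
    · have : rnk c i + 1 ≤ rnk c j := by
        have hsub : univ.filter (fun k => c k = c i ∧ k < i) ∪ {i}
            ⊆ univ.filter (fun k => c k = c j ∧ k < j) := by
          intro k hk
          rcases Finset.mem_union.1 hk with hk | hk
          · simp only [mem_filter, mem_univ, true_and] at hk ⊢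
            exact ⟨by omega, lt_trans hk.2 hlt⟩
          · simp only [Finset.mem_singleton] at hk; subst hk
            simp only [mem_filter, mem_univ, true_and]
            exact ⟨by omega, hlt⟩
        have h2 := Finset.card_le_card hsub
        rw [Finset.card_union_of_disjoint (by
          simp only [Finset.disjoint_singleton_right, mem_filter]
          rintro ⟨-, -, h⟩
          exact lt_irrefl _ h)] at h2
        simpa [rnk] using h2
      omega
    · have : rnk c j + 1 ≤ rnk c i := by
        have hsub : univ.filter (fun k => c k = c j ∧ k < j) ∪ {j}
            ⊆ univ.filter (fun k => c k = c i ∧ k < i) := by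
          intro k hk
          rcases Finset.mem_union.1 hk with hk | hk
          · simp only [mem_filter, mem_univ, true_and] at hk ⊢
            exact ⟨by omega, lt_trans hk.2 hlt⟩
          · simp only [Finset.mem_singleton] at hk; subst hk
            simp only [mem_filter, mem_univ, true_and]
            exact ⟨by omega, hlt⟩
        have h2 := Finset.card_le_card hsub
        rw [Finset.card_union_of_disjoint (by
          simp only [Finset.disjoint_singleton_right, mem_filter]
          rintro ⟨-, -, h⟩
          exact lt_irrefl _ h)] at h2
        simpa [rnk] using h2
      omega
  · have := rk_lt_step h hc; omega

lemma rnk_pred (c : Fin n → ℕ) (i : Fin n) (h1 : 1 ≤ rnk c i) :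
    ∃ j, j < i ∧ c j = c i ∧ rnk c j = rnk c i - 1 := by
  have hne : (univ.filter (fun j => c j = c i ∧ j < i)).Nonempty := by
    rw [← Finset.card_pos]; exact h1
  set T := univ.filter (fun j => c j = c i ∧ j < i) with hT
  set b := T.max' hne with hb
  have h2 : b ∈ T := by rw [hb]; exact T.max'_mem hne
  rw [hT, mem_filter] at h2
  obtain ⟨-, hceq, hlt⟩ := h2
  refine ⟨b, hlt, hceq, ?_⟩
  have hkey : univ.filter (fun k => c k = c b ∧ k < b) = T.erase b := by
    apply Finset.ext; intro k
    simp only [mem_filter, mem_univ, true_and, Finset.mem_erase]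
    constructor
    · rintro ⟨h2, h3⟩
      refine ⟨Fin.ne_of_lt h3, ?_⟩
      rw [hT, mem_filter]
      exact ⟨mem_univ k, by omega, lt_trans h3 hlt⟩
    · rintro ⟨h2, h3⟩
      rw [hT, mem_filter] at h3
      refine ⟨by omega, ?_⟩
      rcases Fin.lt_or_lt_of_ne h2 with hl | hl
      · exact hl
      · exfalso
        have := Finset.le_max' T k (by rw [hT, mem_filter]; exact ⟨mem_univ k, h3.2⟩)
        rw [← hb] at this
        exact absurd hl (not_lt.2 this)
  have hcard : rnk c b = #(T.erase b) := by rw [rnk, hkey]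
  rw [hcard, Finset.card_erase_of_mem (hb ▸ T.max'_mem hne)]
  rfl
end PartA

section PartA2
variable {n : ℕ}

lemma phi_cases (c : Fin n → ℕ) (i : Fin n) :
    (rnk c i = 0 ∧ PhiF c i = c i + 1) ∨ (1 ≤ rnk c i ∧ PhiF c i = c i + rnk c i) := by
  rcases Nat.eq_zero_or_pos (rnk c i) with h | h
  · left; refine ⟨h, ?_⟩; simp [PhiF, h]
  · right; refine ⟨h, ?_⟩; simp only [PhiF]; omega

lemma phi_outcome {c : Fin n → ℕ} (h : Rk c) :
    IsParkingOutcome n (PhiF c) (fun i => ⟨c i + rnk c i, spotN_lt h i⟩)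
    ∧ ∀ i : Fin n, ((⟨c i + rnk c i, spotN_lt h i⟩ : Fin n) : ℕ) ≤ PhiF c i := by
  have hinj : Function.Injective (fun i => (⟨c i + rnk c i, spotN_lt h i⟩ : Fin n)) := by
    intro i j hij
    rw [Fin.mk.injEq] at hij
    exact spotN_inj h hij
  refine ⟨⟨(Finite.injective_iff_bijective.1 hinj), fun i => ⟨?_, fun s hs1 hs2 => ?_⟩⟩, fun i => ?_⟩
  · rcases phi_cases c i with ⟨h0, he⟩ | ⟨h0, he⟩ <;> simp only [he] <;> omega
  · -- first-fit
    simp only at hs2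
    rcases phi_cases c i with ⟨h0, he⟩ | ⟨h0, he⟩
    · rw [he] at hs1; omega
    · rw [he] at hs1
      have hs : (s : ℕ) = c i + rnk c i - 1 := by omega
      obtain ⟨j, hj, hceq, hrnk⟩ := rnk_pred c i h0
      refine ⟨j, hj, ?_⟩
      apply Fin.ext
      simp only [hs, hceq, hrnk]
      omega
  · rcases phi_cases c i with ⟨h0, he⟩ | ⟨h0, he⟩ <;> simp only [he, h0] <;> omega

lemma phi_uipf {c : Fin n → ℕ} (h : Rk c) : IsUnitIntervalPF n (PhiF c) := by
  refine ⟨fun i => ⟨by simp only [PhiF]; omega, ?_⟩, ⟨_, (phi_outcome h).1, (phi_outcome h).2⟩⟩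
  rcases phi_cases c i with ⟨h0, he⟩ | ⟨h0, he⟩ <;> rw [he] <;>
    have := spotN_lt h i <;> omega

lemma spot_unique {α : Fin n → ℕ} {spot spot' : Fin n → Fin n}
    (h1 : IsParkingOutcome n α spot) (h2 : IsParkingOutcome n α spot') : spot = spot' := by
  have key : ∀ (s1 s2 : Fin n → Fin n), IsParkingOutcome n α s1 → IsParkingOutcome n α s2 →
      ∀ i : Fin n, (∀ j, j < i → s1 j = s2 j) → ¬ (s2 i < s1 i) := by
    intro s1 s2 hs1 hs2 i hIH hlt
    obtain ⟨j, hj, hj2⟩ := (hs1.2 i).2 (s2 i) (hs2.2 i).1 hlt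
    have he : s2 j = s2 i := by rw [← hIH j hj, hj2]
    have := hs2.1.1 he
    subst this
    exact absurd hj (lt_irrefl _)
  suffices H : ∀ m : ℕ, ∀ i : Fin n, (i : ℕ) = m → spot i = spot' i by
    funext i; exact H i.val i rfl
  intro m
  induction m using Nat.strong_induction_on with
  | _ m IH =>
    intro i him
    have hIH : ∀ j, j < i → spot j = spot' j := by
      intro j hj
      exact IH (j : ℕ) (by omega) j rfl
    have hIH' : ∀ j, j < i → spot' j = spot j := fun j hj => (hIH j hj).symm
    have k1 := key spot spot' h1 h2 i hIH
    have k2 := key spot' spot h2 h1 i hIH'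
    rcases Nat.lt_trichotomy ((spot i : ℕ)) ((spot' i : ℕ)) with hl | hl | hl
    · exact absurd (by exact hl) k2
    · exact Fin.ext hl
    · exact absurd (by exact hl) k1
end PartA2

section Recover
variable {n : ℕ}

lemma card_val_lt_s3 {m : ℕ} (hm : m ≤ n) :
    #(univ.filter fun t : Fin n => (t : ℕ) < m) = m := by
  conv_rhs => rw [← Finset.card_range m]
  apply Finset.card_bij (fun (t : Fin n) _ => (t : ℕ))
  · intro a ha
    simp only [mem_filter, mem_univ, true_and] at ha
    simpa using ha
  · intro a _ b _ hab; exact Fin.ext hab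
  · intro b hb
    simp only [Finset.mem_range] at hb
    exact ⟨⟨b, by omega⟩, by simp [hb], rfl⟩

lemma card_spot_lt {spot : Fin n → Fin n} (hbij : Function.Bijective spot)
    {m : ℕ} (hm : m ≤ n) :
    #(univ.filter fun j => (spot j : ℕ) < m) = m := by
  conv_rhs => rw [← card_val_lt_s3 hm]
  apply Finset.card_bij (fun j _ => spot j)
  · intro a ha; simpa using ha
  · intro a _ b _ hab; exact hbij.1 hab
  · intro b hb
    obtain ⟨a, rfl⟩ := hbij.2 b
    exact ⟨a, by simpa using hb, rfl⟩

lemma card_spot_band {spot : Fin n → Fin n} (hbij : Function.Bijective spot)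
    {a b : ℕ} (hab : a ≤ b) (hb : b ≤ n) :
    #(univ.filter fun j => a ≤ (spot j : ℕ) ∧ (spot j : ℕ) < b) = b - a := by
  have hsplit := Finset.card_filter_add_card_filter_not
    (s := univ.filter (fun j : Fin n => (spot j : ℕ) < b)) (p := fun j => (spot j : ℕ) < a)
  rw [Finset.filter_filter, Finset.filter_filter] at hsplit
  have h1 : univ.filter (fun j : Fin n => (spot j : ℕ) < b ∧ (spot j : ℕ) < a)
      = univ.filter (fun j : Fin n => (spot j : ℕ) < a) := by
    apply Finset.filter_congr; intro j _; constructor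
    · rintro ⟨-, h2⟩; exact h2
    · intro h2; exact ⟨by omega, h2⟩
  have h2 : univ.filter (fun j : Fin n => (spot j : ℕ) < b ∧ ¬(spot j : ℕ) < a)
      = univ.filter (fun j : Fin n => a ≤ (spot j : ℕ) ∧ (spot j : ℕ) < b) := by
    apply Finset.filter_congr; intro j _; constructor
    · rintro ⟨hx, hy⟩; exact ⟨by omega, hx⟩
    · rintro ⟨hx, hy⟩; exact ⟨hy, by omega⟩
  rw [h1, h2, card_spot_lt hbij hb, card_spot_lt hbij (le_trans hab hb)] at hsplit
  omega

def luckyP (α : Fin n → ℕ) (spot : Fin n → Fin n) (m : Fin n) : Prop :=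
  ∃ j, spot j = m ∧ α j = (m : ℕ) + 1

instance (α : Fin n → ℕ) (spot : Fin n → Fin n) (m : Fin n) :
    Decidable (luckyP α spot m) := by unfold luckyP; infer_instance

/-- the ranking recovered from a parking outcome: largest lucky spot before mine -/
def chatF (α : Fin n → ℕ) (spot : Fin n → Fin n) (i : Fin n) : ℕ :=
  (univ.filter (fun m : Fin n => luckyP α spot m ∧ m ≤ spot i)).sup Fin.val
end Recover

lemma recover {n : ℕ} {α : Fin n → ℕ} {spot : Fin n → Fin n}
    (hout : IsParkingOutcome n α spot)
    (hunit : ∀ i, (spot i : ℕ) ≤ α i) (hpos : ∀ i, 1 ≤ α i) :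
    Rk (chatF α spot) ∧ (∀ i, (spot i : ℕ) = chatF α spot i + rnk (chatF α spot) i)
      ∧ PhiF (chatF α spot) = α := by
  obtain ⟨hbij, hff⟩ := hout
  set c := chatF α spot with hcdef
  have hacase : ∀ i, α i = (spot i : ℕ) + 1 ∨ α i = (spot i : ℕ) := by
    intro i; have := (hff i).1; have := hunit i; omega
  have hlucky0 : ∀ hn : 0 < n, luckyP α spot ⟨0, hn⟩ := by
    intro hn
    obtain ⟨j, hj⟩ := hbij.2 ⟨0, hn⟩
    refine ⟨j, hj, ?_⟩
    have h1 := (hff j).1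
    have h2 := hpos j
    rw [hj] at h1
    simp only at h1 ⊢
    omega
  have hchat_le : ∀ i, c i ≤ (spot i : ℕ) := by
    intro i
    apply Finset.sup_le
    intro m hm
    rw [mem_filter] at hm
    exact hm.2.2
  have hchat_lt : ∀ i, c i < n := fun i => lt_of_le_of_lt (hchat_le i) (spot i).isLt
  have hchat_lucky : ∀ i, luckyP α spot ⟨c i, hchat_lt i⟩ := by
    intro i
    obtain ⟨m0, hm0mem, hm0⟩ := Finset.exists_mem_eq_sup
      (univ.filter (fun m : Fin n => luckyP α spot m ∧ m ≤ spot i))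
      ⟨⟨0, i.pos⟩, by
        simp only [mem_filter, mem_univ, true_and]
        exact ⟨hlucky0 i.pos, by rw [Fin.le_def]; simp⟩⟩ Fin.val
    have he : (⟨c i, hchat_lt i⟩ : Fin n) = m0 := Fin.ext hm0
    rw [he]
    exact (mem_filter.1 hm0mem).2.1
  have hchat_ub : ∀ (i : Fin n) (u : Fin n), luckyP α spot u → u ≤ spot i → (u : ℕ) ≤ c i := by
    intro i u h1 h2
    exact Finset.le_sup (by simp only [mem_filter, mem_univ, true_and]; exact ⟨h1, h2⟩)
  have hB : ∀ (i : Fin n) (u : Fin n), c i < (u : ℕ) → (u : ℕ) ≤ (spot i : ℕ) →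
      ¬ luckyP α spot u := by
    intro i u h1 h2 hl
    have := hchat_ub i u hl (by rw [Fin.le_def]; exact h2)
    omega
  have hdisp : ∀ t : Fin n, ¬ luckyP α spot t → ∀ j, spot j = t →
      1 ≤ (t : ℕ) ∧ ∃ k, k < j ∧ (spot k : ℕ) = (t : ℕ) - 1 := by
    intro t hnl j hj
    have hα : α j = (t : ℕ) := by
      rcases hacase j with h | h
      · exact absurd ⟨j, hj, by rw [hj] at h; exact h⟩ hnl
      · rw [hj] at h; exact h
    have ht1 : 1 ≤ (t : ℕ) := by have := hpos j; omega
    have hlt : (t : ℕ) - 1 < n := by have := t.isLt; omega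
    obtain ⟨k, hk1, hk2⟩ := (hff j).2 ⟨(t : ℕ) - 1, hlt⟩
      (by simp only [hα]; omega) (by rw [hj]; simp only; omega)
    refine ⟨ht1, k, hk1, ?_⟩
    rw [hk2]
  have hchain : ∀ d : ℕ, ∀ a b : Fin n, (b : ℕ) = (a : ℕ) + d →
      (∀ u : Fin n, (a : ℕ) < (u : ℕ) → (u : ℕ) ≤ (b : ℕ) → ¬ luckyP α spot u) →
      ∀ ja jb, spot ja = a → spot jb = b → ja ≤ jb := by
    intro d
    induction d with
    | zero =>
      intro a b hab _ ja jb hja hjb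
      have hab2 : a = b := Fin.ext (by omega)
      subst hab2
      have : ja = jb := hbij.1 (hja.trans hjb.symm)
      exact le_of_eq this
    | succ d IH =>
      intro a b hab hnl ja jb hja hjb
      have hnlb : ¬ luckyP α spot b := hnl b (by omega) (le_refl _)
      obtain ⟨hb1, k, hk1, hk2⟩ := hdisp b hnlb jb hjb
      have hle : ja ≤ k := IH a (spot k) (by omega)
        (fun u h1 h2 => hnl u h1 (by omega)) ja k hja rfl
      exact le_of_lt (lt_of_le_of_lt hle hk1)
  have hchainlt : ∀ a b : Fin n, (a : ℕ) < (b : ℕ) →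
      (∀ u : Fin n, (a : ℕ) < (u : ℕ) → (u : ℕ) ≤ (b : ℕ) → ¬ luckyP α spot u) →
      ∀ ja jb, spot ja = a → spot jb = b → ja < jb := by
    intro a b hab hnl ja jb hja hjb
    have hnlb : ¬ luckyP α spot b := hnl b hab (le_refl _)
    obtain ⟨hb1, k, hk1, hk2⟩ := hdisp b hnlb jb hjb
    have hle : ja ≤ k := hchain ((b : ℕ) - 1 - (a : ℕ)) a (spot k) (by omega)
      (fun u h1 h2 => hnl u h1 (by omega)) ja k hja rfl
    exact lt_of_le_of_lt hle hk1
  have hC : ∀ i j : Fin n, c j < c i ↔ (spot j : ℕ) < c i := by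
    intro i j
    constructor
    · intro h1
      by_contra h2
      push_neg at h2
      have := hchat_ub j ⟨c i, hchat_lt i⟩ (hchat_lucky i) (by rw [Fin.le_def]; exact h2)
      simp only at this
      omega
    · intro h1; exact lt_of_le_of_lt (hchat_le j) h1
  have hRk : Rk c := by
    intro i
    have he : univ.filter (fun j => c j < c i) = univ.filter (fun j => (spot j : ℕ) < c i) :=
      Finset.filter_congr (fun j _ => hC i j)
    rw [he, card_spot_lt hbij (le_of_lt (hchat_lt i))]
  have hE : ∀ i, univ.filter (fun j => c j = c i ∧ j < i)
      = univ.filter (fun j => c i ≤ (spot j : ℕ) ∧ (spot j : ℕ) < (spot i : ℕ)) := by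
    intro i
    apply Finset.ext; intro j
    simp only [mem_filter, mem_univ, true_and]
    constructor
    · rintro ⟨hceq, hji⟩
      have hlei := hchat_le i
      have h1 : c i ≤ (spot j : ℕ) := by have := hchat_le j; omega
      refine ⟨h1, ?_⟩
      by_contra h2
      push_neg at h2
      have hne : spot i ≠ spot j := by
        intro he
        have := hbij.1 he
        rw [this] at hji
        exact lt_irrefl _ hji
      have hlt2 : (spot i : ℕ) < (spot j : ℕ) := by
        have : (spot i : ℕ) ≠ (spot j : ℕ) := fun hv => hne (Fin.ext hv)
        omega
      have := hchainlt (spot i) (spot j) hlt2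
        (fun u hu1 hu2 => hB j u (by omega) hu2) i j rfl rfl
      exact absurd this (not_lt.2 (le_of_lt hji))
    · rintro ⟨h1, h2⟩
      have hcji : c i ≤ c j := by
        have := hchat_ub j ⟨c i, hchat_lt i⟩ (hchat_lucky i) (by rw [Fin.le_def]; exact h1)
        simpa using this
      have hcij : c j ≤ c i := by
        by_contra h3
        push_neg at h3
        exact hB i ⟨c j, hchat_lt j⟩ (by simpa using h3)
          (by simp only; have := hchat_le j; omega) (hchat_lucky j)
      refine ⟨le_antisymm hcij hcji, ?_⟩
      exact hchainlt (spot j) (spot i) h2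
        (fun u hu1 hu2 => hB i u (by omega) hu2) j i rfl rfl
  have hF : ∀ i, rnk c i = (spot i : ℕ) - c i := by
    intro i
    rw [rnk, hE i, card_spot_band hbij (hchat_le i) (le_of_lt (spot i).isLt)]
  refine ⟨hRk, fun i => by have := hchat_le i; rw [hF i]; omega, ?_⟩
  funext i
  have hluckyiff : luckyP α spot (spot i) ↔ α i = (spot i : ℕ) + 1 := by
    constructor
    · rintro ⟨j, hj1, hj2⟩
      have h3 := hbij.1 hj1
      subst h3
      exact hj2
    · intro h; exact ⟨i, rfl, h⟩
  rcases hacase i with hai | hai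
  · have hci : c i = (spot i : ℕ) := by
      have h1 := hchat_ub i (spot i) (hluckyiff.2 hai) (le_refl _)
      have h2 := hchat_le i
      omega
    rw [PhiF, hF i, hci, hai]
    omega
  · have hnl : ¬ luckyP α spot (spot i) := by
      rw [hluckyiff]
      omega
    have hci : c i ≠ (spot i : ℕ) := by
      intro he
      exact hnl (by
        have he2 : (⟨c i, hchat_lt i⟩ : Fin n) = spot i := Fin.ext he
        rw [← he2]
        exact hchat_lucky i)
    have h2 := hchat_le i
    rw [PhiF, hF i, hai]
    omega

lemma chat_phi {n : ℕ} {c : Fin n → ℕ} (h : Rk c) :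
    chatF (PhiF c) (fun i => ⟨c i + rnk c i, spotN_lt h i⟩) = c := by
  funext i
  simp only [chatF]
  apply le_antisymm
  · apply Finset.sup_le
    intro u hu
    rw [mem_filter] at hu
    obtain ⟨-, ⟨j, hj1, hj2⟩, hu2⟩ := hu
    have hval : (u : ℕ) = c j + rnk c j := by rw [← hj1]
    have hr0 : rnk c j = 0 := by
      rcases phi_cases c j with ⟨h0, he⟩ | ⟨h0, he⟩
      · exact h0
      · exfalso; rw [he] at hj2; omega
    have hu2' : (u : ℕ) ≤ c i + rnk c i := by
      rw [Fin.le_def] at hu2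
      exact hu2
    have hle : c j ≤ c i := by
      by_contra h3
      push_neg at h3
      have := rk_lt_step h h3
      omega
    omega
  · have hTne : (univ.filter (fun j => c j = c i)).Nonempty := ⟨i, by simp⟩
    set j0 := (univ.filter (fun j => c j = c i)).min' hTne with hj0
    have hj0mem : j0 ∈ univ.filter (fun j => c j = c i) := by
      rw [hj0]; exact Finset.min'_mem _ _
    have hcj0 : c j0 = c i := by
      rw [mem_filter] at hj0mem
      exact hj0mem.2
    have hr0 : rnk c j0 = 0 := by
      rw [rnk, Finset.card_eq_zero, Finset.filter_eq_empty_iff]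
      intro k _
      rintro ⟨hk1, hk2⟩
      have hmin : j0 ≤ k := by
        rw [hj0]
        exact Finset.min'_le _ k (by simp only [mem_filter, mem_univ, true_and]; omega)
      exact absurd hk2 (not_lt.2 hmin)
    have hvspot : c i = ((⟨c j0 + rnk c j0, spotN_lt h j0⟩ : Fin n) : ℕ) := by
      simp only [hcj0, hr0]
      omega
    refine le_trans (le_of_eq hvspot) (Finset.le_sup ?_)
    rw [mem_filter]
    refine ⟨mem_univ _, ⟨j0, rfl, ?_⟩, ?_⟩
    · rcases phi_cases c j0 with ⟨h0, he⟩ | ⟨h0, he⟩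
      · rw [he]; simp only; omega
      · omega
    · rw [Fin.le_def]
      simp only [hcj0, hr0]
      omega

/-- The number of unit interval parking functions of length `n` is the `n`-th
Fubini number. -/
theorem card_unitIntervalPF (n : ℕ) (hn : 1 ≤ n) :
    Nat.card {α : Fin n → ℕ // IsUnitIntervalPF n α} = Fub n := by
  rw [← gRk_eq_Fub]
  have hbijF : Function.Bijective (fun x : {c : Fin n → ℕ // Rk c} =>
      (⟨PhiF x.1, phi_uipf x.2⟩ : {α : Fin n → ℕ // IsUnitIntervalPF n α})) := by
    constructor
    · rintro ⟨c, hc⟩ ⟨c', hc'⟩ hEq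
      simp only [Subtype.mk.injEq] at hEq ⊢
      have ho1 := (phi_outcome hc).1
      have ho2 := (phi_outcome hc').1
      rw [← hEq] at ho2
      have hsp := spot_unique ho1 ho2
      have r1 := chat_phi hc
      have r2 := chat_phi hc'
      rw [← r1, ← r2, hsp, hEq]
    · rintro ⟨α, hα⟩
      obtain ⟨hbnd, spot, hout, hunit⟩ := hα
      obtain ⟨hRk, hspot, hPhi⟩ := recover hout hunit (fun i => (hbnd i).1)
      exact ⟨⟨chatF α spot, hRk⟩, Subtype.ext hPhi⟩
  exact (Nat.card_congr (Equiv.ofBijective _ hbijF)).symm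
end

section
/- The map psi sending a unit interval parking function alpha with block structure pi_1 | pi_2 | ... | pi_k to the word w with w_i = j whenever alpha_i lies in block pi_j is a bijection from unit interval parking functions of length n to Cayley permutations of length n, and it preserves the inversion set: Inv(psi(alpha)) = Inv(alpha). -/
def IsCayley (n : ℕ) (w : Fin n → ℕ) : Prop :=
  (∀ i, 1 ≤ w i) ∧ ∀ (i : Fin n) (v : ℕ), 1 ≤ v → v ≤ w i → ∃ j, w j = v

def psi (n : ℕ) (α : Fin n → ℕ) : Fin n → ℕ := fun i =>
  ((Finset.Icc 1 (α i)).filter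
    (fun m => (Finset.univ.filter (fun j : Fin n => α j < m)).card = m - 1)).card

namespace UPFP
def cntLt (n : ℕ) (α : Fin n → ℕ) (m : ℕ) : ℕ :=
  (Finset.univ.filter (fun j : Fin n => α j < m)).card


lemma cntLt_mono {n : ℕ} (α : Fin n → ℕ) {a b : ℕ} (h : a ≤ b) :
    cntLt n α a ≤ cntLt n α b := by
  apply Finset.card_le_card
  intro j hj
  simp only [Finset.mem_filter] at *
  exact ⟨hj.1, lt_of_lt_of_le hj.2 h⟩

lemma card_filter_val_lt (n m : ℕ) :
    ((Finset.univ.filter fun s : Fin n => (s:ℕ) < m)).card = min m n := by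
  rw [← Finset.card_range (min m n)]
  refine Finset.card_bij' (fun (s : Fin n) _ => (s : ℕ))
    (fun k hk => (⟨k, lt_of_lt_of_le (Finset.mem_range.mp hk) (min_le_right _ _)⟩ : Fin n))
    ?_ ?_ ?_ ?_
  · intro s hs
    simp only [Finset.mem_filter] at hs
    exact Finset.mem_range.mpr (lt_min hs.2 s.isLt)
  · intro k hk
    simp only [Finset.mem_filter, Finset.mem_univ, true_and]
    exact lt_of_lt_of_le (Finset.mem_range.mp hk) (min_le_left _ _)
  · intro s hs; rfl
  · intro k hk; rfl

lemma card_filter_spot_lt {n : ℕ} {spot : Fin n → Fin n} (hbij : Function.Bijective spot) (m : ℕ) :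
    ((Finset.univ.filter fun i : Fin n => (spot i : ℕ) < m)).card = min m n := by
  rw [← card_filter_val_lt n m]
  refine Finset.card_bij' (fun (i : Fin n) _ => spot i)
    (fun s _ => (Equiv.ofBijective spot hbij).symm s) ?_ ?_ ?_ ?_
  · intro i hi
    simp only [Finset.mem_filter, Finset.mem_univ, true_and] at hi ⊢
    exact hi
  · intro s hs
    simp only [Finset.mem_filter, Finset.mem_univ, true_and] at hs ⊢
    have : spot ((Equiv.ofBijective spot hbij).symm s) = s :=
      (Equiv.ofBijective spot hbij).apply_symm_apply s
    rw [this]; exact hs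
  · intro i _
    exact (Equiv.ofBijective spot hbij).symm_apply_apply i
  · intro s _
    exact (Equiv.ofBijective spot hbij).apply_symm_apply s

variable {n : ℕ} {α : Fin n → ℕ}


variable {n : ℕ} {α : Fin n → ℕ} {spot : Fin n → Fin n}

lemma lowerA (hout : IsParkingOutcome n α spot) {m : ℕ} (hm : m ≤ n) :
    m ≤ cntLt n α (m+1) := by
  have hsub : (Finset.univ.filter fun i : Fin n => (spot i : ℕ) < m) ⊆
      (Finset.univ.filter fun j : Fin n => α j < m + 1) := by
    intro k hk
    simp only [Finset.mem_filter, Finset.mem_univ, true_and] at hk ⊢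
    have := (hout.2 k).1
    omega
  have := Finset.card_le_card hsub
  rw [card_filter_spot_lt hout.1] at this
  unfold cntLt
  omega

lemma upperA (hout : IsParkingOutcome n α spot) (hsp : ∀ i, (spot i : ℕ) ≤ α i) (m : ℕ) :
    cntLt n α (m+1) ≤ m + 1 := by
  have hsub : (Finset.univ.filter fun j : Fin n => α j < m + 1) ⊆
      (Finset.univ.filter fun i : Fin n => (spot i : ℕ) < m + 1) := by
    intro k hk
    simp only [Finset.mem_filter, Finset.mem_univ, true_and] at hk ⊢
    have := hsp k
    omega
  have := Finset.card_le_card hsub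
  rw [card_filter_spot_lt hout.1] at this
  unfold cntLt
  omega

lemma propB (h : IsUnitIntervalPF n α) {i j : Fin n} (hij : i < j) (hji : α j < α i) :
    ∃ m, α j < m ∧ m ≤ α i ∧ cntLt n α m = m - 1 := by
  by_contra hno
  push_neg at hno
  obtain ⟨hbd, spot, hout, hsp⟩ := h
  set a := α i with ha
  set b := α j with hb
  have hb1 : 1 ≤ b := (hbd j).1
  have han : a ≤ n := (hbd i).2
  -- every m in (b, a] has cntLt = m
  have hK0 : ∀ m, b < m → m ≤ a → cntLt n α m = m := by
    intro m h1 h2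
    have hlo : m - 1 ≤ cntLt n α m := by
      have := lowerA hout (m := m - 1) (by omega)
      have e : m - 1 + 1 = m := by omega
      rwa [e] at this
    have hhi : cntLt n α m ≤ m := by
      have := upperA hout hsp (m - 1)
      have e : m - 1 + 1 = m := by omega
      rwa [e] at this
    have := hno m h1 h2
    omega
  -- membership equivalence in the interval
  have hK : ∀ m, b < m → m ≤ a → ∀ k : Fin n, ((spot k : ℕ) < m ↔ α k < m) := by
    intro m h1 h2
    have heq : (Finset.univ.filter fun k : Fin n => α k < m) =
        (Finset.univ.filter fun k : Fin n => (spot k : ℕ) < m) := by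
      apply Finset.eq_of_subset_of_card_le
      · intro k hk
        simp only [Finset.mem_filter, Finset.mem_univ, true_and] at hk ⊢
        exact lt_of_le_of_lt (hsp k) hk
      · rw [card_filter_spot_lt hout.1]
        have := hK0 m h1 h2
        unfold cntLt at this
        omega
    intro k
    constructor
    · intro hk
      have : k ∈ (Finset.univ.filter fun k : Fin n => α k < m) := by
        rw [heq]; simp only [Finset.mem_filter, Finset.mem_univ, true_and]; exact hk
      simpa using this
    · intro hk
      exact lt_of_le_of_lt (hsp k) hk
  -- spot of car i is a (0-indexed)
  have hspoti : (spot i : ℕ) = a := by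
    have h1 : a ≤ (spot i : ℕ) + 1 := (hout.2 i).1
    have h2 : (spot i : ℕ) ≤ a := hsp i
    rcases Nat.lt_or_ge (spot i : ℕ) a with hlt | hge
    · exfalso
      have := (hK a (by omega) le_rfl i).1 hlt
      omega
    · omega
  have han' : a < n := by have := (spot i).isLt; omega
  -- the chain
  have chain : ∀ t, 1 ≤ t → t ≤ a - b →
      ∃ k : Fin n, k < i ∧ α k = a - t ∧ (spot k : ℕ) = a - t := by
    intro t ht1
    induction t, ht1 using Nat.le_induction with
    | base =>
      intro _
      have hsval : (⟨a - 1, by omega⟩ : Fin n).1 = a - 1 := rfl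
      obtain ⟨k, hk, hkspot⟩ := (hout.2 i).2 ⟨a - 1, by omega⟩ (by simp; omega) (by simp; omega)
      have hkv : (spot k : ℕ) = a - 1 := by rw [hkspot]
      have hαk : α k < a := (hK a (by omega) le_rfl k).1 (by omega)
      have hαk2 : (spot k : ℕ) ≤ α k := hsp k
      exact ⟨k, hk, by omega, hkv⟩
    | succ t ht1 ih =>
      intro htab
      obtain ⟨k, hki, hαk, hsk⟩ := ih (by omega)
      obtain ⟨k', hk', hk'spot⟩ := (hout.2 k).2 ⟨a - t - 1, by omega⟩ (by simp; omega) (by simp; omega)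
      have hk'v : (spot k' : ℕ) = a - t - 1 := by rw [hk'spot]
      have hαk' : α k' < a - t := (hK (a - t) (by omega) (by omega) k').1 (by omega)
      have hαk'2 : (spot k' : ℕ) ≤ α k' := hsp k'
      exact ⟨k', lt_trans hk' hki, by omega, by omega⟩
  obtain ⟨k, hki, hαk, hsk⟩ := chain (a - b) (by omega) le_rfl
  have hαkb : α k = b := by omega
  have hskb : (spot k : ℕ) = b := by omega
  obtain ⟨k', hk'k, hk'spot⟩ := (hout.2 k).2 ⟨b - 1, by omega⟩ (by simp; omega) (by simp; omega)
  have hk'v : (spot k' : ℕ) = b - 1 := by rw [hk'spot]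
  -- now car j has nowhere to park
  have hj1 : b ≤ (spot j : ℕ) + 1 := (hout.2 j).1
  have hj2 : (spot j : ℕ) ≤ b := hsp j
  have hinj := hout.1.1
  rcases (by omega : (spot j : ℕ) = b ∨ (spot j : ℕ) = b - 1) with hc | hc
  · have : spot j = spot k := Fin.ext (by omega)
    have : j = k := hinj this
    have : j < j := by rw [this] at hij ⊢; exact lt_trans hki hij
    exact absurd this (lt_irrefl j)
  · have : spot j = spot k' := Fin.ext (by omega)
    have hjk : j = k' := hinj this
    have : k' < j := lt_trans (lt_trans hk'k hki) hij
    rw [← hjk] at this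
    exact absurd this (lt_irrefl j)



lemma psi_def (i : Fin n) :
    psi n α i = ((Finset.Icc 1 (α i)).filter (fun m => cntLt n α m = m - 1)).card := rfl

lemma psi_mono {i i' : Fin n} (h : α i ≤ α i') : psi n α i ≤ psi n α i' := by
  apply Finset.card_le_card
  intro m hm
  simp only [Finset.mem_filter, Finset.mem_Icc] at hm ⊢
  exact ⟨⟨hm.1.1, le_trans hm.1.2 h⟩, hm.2⟩

lemma start_one (hpos : ∀ i : Fin n, 1 ≤ α i) : cntLt n α 1 = 0 := by
  unfold cntLt
  rw [Finset.card_eq_zero]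
  rw [Finset.filter_eq_empty_iff]
  intro j _
  have := hpos j
  omega

lemma psi_pos (hpos : ∀ i : Fin n, 1 ≤ α i) (i : Fin n) : 1 ≤ psi n α i := by
  rw [psi_def]
  rw [Nat.one_le_iff_ne_zero, ← Nat.pos_iff_ne_zero, Finset.card_pos]
  refine ⟨1, ?_⟩
  simp only [Finset.mem_filter, Finset.mem_Icc]
  exact ⟨⟨le_rfl, hpos i⟩, by rw [start_one hpos]⟩

lemma exists_rank (T : Finset ℕ) {v : ℕ} (h1 : 1 ≤ v) (h2 : v ≤ T.card) :
    ∃ m ∈ T, (T.filter (fun x => x ≤ m)).card = v := by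
  set f : ℕ → ℕ := fun m => (T.filter (fun x => x ≤ m)).card with hf
  have hsm : ∀ x ∈ T, ∀ y ∈ T, x < y → f x < f y := by
    intro x hx y hy hxy
    apply Finset.card_lt_card
    rw [Finset.ssubset_iff_of_subset]
    · exact ⟨y, Finset.mem_filter.mpr ⟨hy, le_rfl⟩,
        fun hc => by simp only [Finset.mem_filter] at hc; omega⟩
    · intro z hz
      simp only [Finset.mem_filter] at hz ⊢
      exact ⟨hz.1, by omega⟩
  have hinj : Set.InjOn f T := by
    intro x hx y hy hxy
    rcases lt_trichotomy x y with h | h | h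
    · exact absurd hxy (Nat.ne_of_lt (hsm x hx y hy h))
    · exact h
    · exact absurd hxy.symm (Nat.ne_of_lt (hsm y hy x hx h))
  have hsub : T.image f ⊆ Finset.Icc 1 T.card := by
    intro c hc
    obtain ⟨m, hm, rfl⟩ := Finset.mem_image.mp hc
    rw [Finset.mem_Icc]
    constructor
    · rw [Nat.one_le_iff_ne_zero, ← Nat.pos_iff_ne_zero, Finset.card_pos]
      exact ⟨m, Finset.mem_filter.mpr ⟨hm, le_rfl⟩⟩
    · exact Finset.card_le_card (Finset.filter_subset _ _)
  have hcard : (T.image f).card = T.card := Finset.card_image_of_injOn hinj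
  have heq : T.image f = Finset.Icc 1 T.card := by
    apply Finset.eq_of_subset_of_card_le hsub
    rw [hcard, Nat.card_Icc]
    omega
  have : v ∈ T.image f := by
    rw [heq, Finset.mem_Icc]; exact ⟨h1, h2⟩
  obtain ⟨m, hm, hfm⟩ := Finset.mem_image.mp this
  exact ⟨m, hm, hfm⟩

lemma exists_val_eq (hlow : ∀ m ≤ n, m ≤ cntLt n α (m+1)) {m : ℕ}
    (h1 : 1 ≤ m) (h2 : m ≤ n) (hstart : cntLt n α m = m - 1) : ∃ j, α j = m := by
  by_contra hc
  push_neg at hc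
  have : cntLt n α (m + 1) = cntLt n α m := by
    unfold cntLt
    congr 1
    apply Finset.filter_congr
    intro j _
    have := hc j
    constructor <;> intro <;> omega
  have := hlow m h2
  omega

lemma psi_cayley (hpos : ∀ i : Fin n, 1 ≤ α i) (hbd : ∀ i : Fin n, α i ≤ n)
    (hlow : ∀ m ≤ n, m ≤ cntLt n α (m+1)) :
    (∀ i, 1 ≤ psi n α i) ∧
      ∀ (i : Fin n) (v : ℕ), 1 ≤ v → v ≤ psi n α i → ∃ j, psi n α j = v := by
  refine ⟨psi_pos hpos, ?_⟩
  intro i v hv1 hv2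
  rw [psi_def] at hv2
  set T := (Finset.Icc 1 (α i)).filter (fun m => cntLt n α m = m - 1) with hT
  obtain ⟨m, hmT, hrank⟩ := exists_rank T hv1 hv2
  have hmdata : (1 ≤ m ∧ m ≤ α i) ∧ cntLt n α m = m - 1 := by
    simpa only [hT, Finset.mem_filter, Finset.mem_Icc] using hmT
  obtain ⟨j, hj⟩ := exists_val_eq hlow hmdata.1.1 (le_trans hmdata.1.2 (hbd i)) hmdata.2
  refine ⟨j, ?_⟩
  rw [psi_def, hj]
  rw [← hrank]
  congr 1
  ext x
  simp only [hT, Finset.mem_filter, Finset.mem_Icc]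
  constructor
  · rintro ⟨⟨hx1, hx2⟩, hx3⟩
    exact ⟨⟨⟨hx1, le_trans hx2 hmdata.1.2⟩, hx3⟩, hx2⟩
  · rintro ⟨⟨⟨hx1, _⟩, hx3⟩, hx4⟩
    exact ⟨⟨hx1, hx4⟩, hx3⟩



def blt (n : ℕ) (w : Fin n → ℕ) (i : Fin n) : ℕ :=
  (Finset.univ.filter (fun j : Fin n => w j < w i)).card

def rnk (n : ℕ) (w : Fin n → ℕ) (i : Fin n) : ℕ :=
  (Finset.univ.filter (fun j : Fin n => j ≤ i ∧ w j = w i)).card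

def cbl (n : ℕ) (w : Fin n → ℕ) (i : Fin n) : ℕ :=
  (Finset.univ.filter (fun j : Fin n => w j = w i)).card

def phi (n : ℕ) (w : Fin n → ℕ) : Fin n → ℕ := fun i =>
  blt n w i + 1 + (rnk n w i - 2)

def pspot (n : ℕ) (w : Fin n → ℕ) (i : Fin n) : ℕ := blt n w i + rnk n w i - 1

variable {w : Fin n → ℕ}

lemma rnk_pos (i : Fin n) : 1 ≤ rnk n w i := by
  unfold rnk
  rw [Nat.one_le_iff_ne_zero, ← Nat.pos_iff_ne_zero, Finset.card_pos]
  exact ⟨i, by simp⟩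

lemma blt_add_cbl (i : Fin n) :
    blt n w i + cbl n w i = (Finset.univ.filter (fun j : Fin n => w j < w i + 1)).card := by
  unfold blt cbl
  rw [← Finset.card_union_of_disjoint]
  · congr 1
    ext j
    simp only [Finset.mem_union, Finset.mem_filter, Finset.mem_univ, true_and]
    omega
  · rw [Finset.disjoint_filter]
    intro j _ h1
    omega

lemma rnk_le_cbl (i : Fin n) : rnk n w i ≤ cbl n w i := by
  apply Finset.card_le_card
  intro j hj
  simp only [Finset.mem_filter, Finset.mem_univ, true_and] at hj ⊢
  exact hj.2

lemma blt_add_rnk_le (i : Fin n) : blt n w i + rnk n w i ≤ n := by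
  have h1 := rnk_le_cbl (w := w) i
  have h2 := blt_add_cbl (w := w) i
  have h3 : (Finset.univ.filter (fun j : Fin n => w j < w i + 1)).card ≤ n := by
    have := Finset.card_filter_le Finset.univ (fun j : Fin n => w j < w i + 1)
    simpa using this
  omega

lemma blt_congr {i j : Fin n} (h : w i = w j) : blt n w i = blt n w j := by
  unfold blt; rw [h]

lemma blt_lt_of_lt {i j : Fin n} (h : w i < w j) :
    blt n w i + cbl n w i ≤ blt n w j := by
  rw [blt_add_cbl]
  apply Finset.card_le_card
  intro k hk
  simp only [Finset.mem_filter, Finset.mem_univ, true_and] at hk ⊢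
  omega

lemma rnk_strict_mono {i j : Fin n} (hij : i < j) (h : w i = w j) :
    rnk n w i < rnk n w j := by
  apply Finset.card_lt_card
  rw [Finset.ssubset_iff_of_subset]
  · refine ⟨j, by simp, ?_⟩
    simp only [Finset.mem_filter, Finset.mem_univ, true_and]
    intro hc
    exact absurd hc.1 (not_le.mpr hij)
  · intro k hk
    simp only [Finset.mem_filter, Finset.mem_univ, true_and] at hk ⊢
    exact ⟨le_trans hk.1 (le_of_lt hij), hk.2.trans h⟩

lemma rnk_pred {i : Fin n} (h : 2 ≤ rnk n w i) :
    ∃ j : Fin n, j < i ∧ w j = w i ∧ rnk n w j = rnk n w i - 1 := by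
  set P := Finset.univ.filter (fun j : Fin n => j < i ∧ w j = w i) with hP
  have hcard : P.card + 1 = rnk n w i := by
    unfold rnk
    have : Finset.univ.filter (fun j : Fin n => j ≤ i ∧ w j = w i) = insert i P := by
      ext j
      simp only [hP, Finset.mem_insert, Finset.mem_filter, Finset.mem_univ, true_and]
      constructor
      · rintro ⟨h1, h2⟩
        rcases lt_or_eq_of_le h1 with h | h
        · exact Or.inr ⟨h, h2⟩
        · exact Or.inl h
      · rintro (rfl | ⟨h1, h2⟩)
        · exact ⟨le_rfl, rfl⟩
        · exact ⟨le_of_lt h1, h2⟩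
    rw [this, Finset.card_insert_of_notMem]
    simp only [hP, Finset.mem_filter, Finset.mem_univ, true_and]
    rintro ⟨h1, -⟩
    exact absurd h1 (lt_irrefl i)
  have hne : P.Nonempty := by
    rw [← Finset.card_pos]; omega
  set j := P.max' hne with hj
  have hjP : j ∈ P := P.max'_mem hne
  simp only [hP, Finset.mem_filter, Finset.mem_univ, true_and] at hjP
  refine ⟨j, hjP.1, hjP.2, ?_⟩
  have : Finset.univ.filter (fun k : Fin n => k ≤ j ∧ w k = w j) = P := by
    ext k
    simp only [hP, Finset.mem_filter, Finset.mem_univ, true_and]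
    constructor
    · rintro ⟨h1, h2⟩
      exact ⟨lt_of_le_of_lt h1 hjP.1, h2.trans hjP.2⟩
    · rintro ⟨h1, h2⟩
      refine ⟨Finset.le_max' P k ?_, h2.trans hjP.2.symm⟩
      simp only [hP, Finset.mem_filter, Finset.mem_univ, true_and]
      exact ⟨h1, h2⟩
  have hrnkj : rnk n w j = P.card := by unfold rnk; rw [this]
  omega

lemma rnk_surj_aux : ∀ (t : ℕ) (i : Fin n), t + 1 ≤ rnk n w i →
    ∃ j : Fin n, j ≤ i ∧ w j = w i ∧ rnk n w j = rnk n w i - t := by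
  intro t
  induction t with
  | zero => intro i _; exact ⟨i, le_rfl, rfl, by omega⟩
  | succ t ih =>
    intro i ht
    obtain ⟨j, hji, hwj, hrj⟩ := ih i (by omega)
    obtain ⟨j', hj', hwj', hrj'⟩ := rnk_pred (w := w) (i := j) (by omega)
    exact ⟨j', le_trans (le_of_lt hj') hji, hwj'.trans hwj, by omega⟩

lemma rnk_surj {i : Fin n} {r : ℕ} (h1 : 1 ≤ r) (h2 : r ≤ rnk n w i) :
    ∃ j : Fin n, j ≤ i ∧ w j = w i ∧ rnk n w j = r := by
  obtain ⟨j, hji, hwj, hrj⟩ := rnk_surj_aux (w := w) (rnk n w i - r) i (by omega)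
  exact ⟨j, hji, hwj, by omega⟩

lemma pspot_lt (i : Fin n) (hn : 0 < n) : pspot n w i < n := by
  have := blt_add_rnk_le (w := w) i
  have := rnk_pos (w := w) i
  unfold pspot
  omega

lemma phi_spec (i : Fin n) :
    (1 ≤ phi n w i ∧ phi n w i ≤ n) ∧
      phi n w i ≤ pspot n w i + 1 ∧ pspot n w i ≤ phi n w i := by
  have h1 := blt_add_rnk_le (w := w) i
  have h2 := rnk_pos (w := w) i
  unfold phi pspot
  omega

lemma pspot_injective : Function.Injective (fun i : Fin n => pspot n w i) := by
  intro i j hij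
  simp only at hij
  by_contra hne
  -- wlog via cases on value comparison
  rcases lt_trichotomy (w i) (w j) with hw | hw | hw
  · have ha := blt_lt_of_lt hw
    have hb := rnk_le_cbl (w := w) i
    have hc := rnk_pos (w := w) i
    have hd := rnk_pos (w := w) j
    unfold pspot at hij
    omega
  · have hblt : blt n w i = blt n w j := blt_congr hw
    rcases lt_trichotomy i j with h | h | h
    · have := rnk_strict_mono h hw
      unfold pspot at hij
      have := rnk_pos (w := w) i
      omega
    · exact hne h
    · have := rnk_strict_mono h hw.symm
      unfold pspot at hij
      have := rnk_pos (w := w) j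
      omega
  · have ha := blt_lt_of_lt hw
    have hb := rnk_le_cbl (w := w) j
    have hc := rnk_pos (w := w) i
    have hd := rnk_pos (w := w) j
    unfold pspot at hij
    omega

def phiSpot (n : ℕ) (w : Fin n → ℕ) : Fin n → Fin n := fun i =>
  ⟨pspot n w i, pspot_lt i i.pos⟩

lemma phi_is_upf (w : Fin n → ℕ) : IsUnitIntervalPF n (phi n w) := by
  constructor
  · intro i; exact (phi_spec i).1
  refine ⟨phiSpot n w, ⟨?_, ?_⟩, ?_⟩
  · rw [← Finite.injective_iff_bijective]
    intro i j hij
    apply pspot_injective (w := w)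
    simpa [phiSpot] using congrArg Fin.val hij
  · intro i
    refine ⟨(phi_spec i).2.1, ?_⟩
    intro s hs1 hs2
    simp only [phiSpot] at hs1 hs2 ⊢
    -- s = phi i - 1 and pspot i = phi i, so rnk i ≥ 2
    have hspec := phi_spec (w := w) i
    have hr2 : 2 ≤ rnk n w i := by
      by_contra hr
      have h2 := rnk_pos (w := w) i
      have : rnk n w i = 1 := by omega
      unfold phi at hs1
      unfold pspot at hs2
      omega
    obtain ⟨j, hji, hwj, hrj⟩ := rnk_pred hr2
    refine ⟨j, hji, ?_⟩
    apply Fin.ext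
    simp only [phiSpot]
    have hbltj : blt n w j = blt n w i := blt_congr hwj
    have h1 := blt_add_rnk_le (w := w) i
    unfold phi at hs1
    unfold pspot at hs2 ⊢
    omega
  · intro i
    simp only [phiSpot]
    exact (phi_spec i).2.2


variable {n : ℕ} {w : Fin n → ℕ}

def scount (n : ℕ) (w : Fin n → ℕ) (q : ℕ) : ℕ :=
  (Finset.univ.filter (fun j : Fin n => w j < q)).card

lemma blt_eq_scount (j : Fin n) : blt n w j = scount n w (w j) := rfl

lemma scount_mono {q q' : ℕ} (h : q ≤ q') : scount n w q ≤ scount n w q' := by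
  apply Finset.card_le_card
  intro j hj
  simp only [Finset.mem_filter, Finset.mem_univ, true_and] at hj ⊢
  omega

lemma phi_lt_start_iff (j : Fin n) (q : ℕ) :
    phi n w j < scount n w q + 1 ↔ w j < q := by
  constructor
  · intro h
    by_contra hc
    push_neg at hc
    have h1 : scount n w q ≤ scount n w (w j) := scount_mono hc
    have h2 : blt n w j = scount n w (w j) := blt_eq_scount j
    unfold phi at h
    omega
  · intro h
    have h1 := rnk_le_cbl (w := w) j
    have h2 := rnk_pos (w := w) j
    have h3 := blt_add_cbl (w := w) j
    have h4 : (Finset.univ.filter (fun k : Fin n => w k < w j + 1)).card ≤ scount n w q :=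
      scount_mono (by omega)
    unfold phi
    omega

lemma start_phi (q : ℕ) :
    cntLt n (phi n w) (scount n w q + 1) = (scount n w q + 1) - 1 := by
  unfold cntLt
  have : Finset.univ.filter (fun j : Fin n => phi n w j < scount n w q + 1) =
      Finset.univ.filter (fun j : Fin n => w j < q) := by
    apply Finset.filter_congr
    intro j _
    exact phi_lt_start_iff j q
  rw [this]
  rfl

lemma scount_strict_mono (hw : IsCayley n w) {q q' : ℕ} (h1 : 1 ≤ q) (hqw : ∃ i : Fin n, q ≤ w i)
    (h : q < q') : scount n w q < scount n w q' := by
  obtain ⟨i, hi⟩ := hqw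
  obtain ⟨j, hj⟩ := hw.2 i q h1 hi
  apply Finset.card_lt_card
  rw [Finset.ssubset_iff_of_subset]
  · exact ⟨j, by simp only [Finset.mem_filter, Finset.mem_univ, true_and]; omega,
      by simp only [Finset.mem_filter, Finset.mem_univ, true_and]; omega⟩
  · intro k hk
    simp only [Finset.mem_filter, Finset.mem_univ, true_and] at hk ⊢
    omega

lemma psi_phi (hw : IsCayley n w) : psi n (phi n w) = w := by
  funext i
  set α := phi n w with hα
  have hupf := phi_is_upf (n := n) w
  obtain ⟨hbd, spot, hout, hsp⟩ := hupf
  have hlow : ∀ m ≤ n, m ≤ cntLt n α (m+1) := fun m hm => lowerA hout hm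
  show ((Finset.Icc 1 (α i)).filter (fun m => cntLt n α m = m - 1)).card = w i
  have hset : (Finset.Icc 1 (α i)).filter (fun m => cntLt n α m = m - 1) =
      (Finset.Icc 1 (w i)).image (fun q => scount n w q + 1) := by
    ext m
    simp only [Finset.mem_filter, Finset.mem_Icc, Finset.mem_image]
    constructor
    · rintro ⟨⟨hm1, hm2⟩, hm3⟩
      -- hard direction: m is s_q for some q ≤ w i
      obtain ⟨j₀, hj₀⟩ := exists_val_eq hlow hm1 (le_trans hm2 (hbd i).2) hm3
      set q := w j₀ with hq
      have hbltj₀ : blt n w j₀ = scount n w q := blt_eq_scount j₀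
      have hrpos := rnk_pos (w := w) j₀
      have hqi : q ≤ w i := by
        by_contra hc
        push_neg at hc
        have h1 : α i < scount n w q + 1 := (phi_lt_start_iff i q).mpr hc
        have h2 : scount n w q + 1 ≤ α j₀ := by
          have : α j₀ = phi n w j₀ := rfl
          unfold phi at this
          omega
        omega
      have hmge : scount n w q + 1 ≤ m := by
        have : α j₀ = phi n w j₀ := rfl
        unfold phi at this
        omega
      have hmle : m ≤ scount n w q + 1 := by
        by_contra hc
        push_neg at hc
        set r₀ := rnk n w j₀ with hr₀
        set b₀ := scount n w q with hb₀
        have hr₀3 : 3 ≤ r₀ ∧ m = b₀ + r₀ - 1 := by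
          have : α j₀ = phi n w j₀ := rfl
          unfold phi at this
          omega
        set B := Finset.univ.filter (fun j : Fin n => w j = q ∧ rnk n w j < r₀) with hB
        have hcardB : B.card = r₀ - 1 := by
          have hbij : B.card = (Finset.Icc 1 (r₀ - 1)).card := by
            apply Finset.card_bij (fun (j : Fin n) _ => rnk n w j)
            · intro j hj
              simp only [hB, Finset.mem_filter, Finset.mem_univ, true_and] at hj
              have := rnk_pos (w := w) j
              rw [Finset.mem_Icc]
              omega
            · intro j₁ h₁ j₂ h₂ heq
              simp only [hB, Finset.mem_filter, Finset.mem_univ, true_and] at h₁ h₂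
              rcases lt_trichotomy j₁ j₂ with h | h | h
              · exact absurd heq (Nat.ne_of_lt (rnk_strict_mono h (h₁.1.trans h₂.1.symm)))
              · exact h
              · exact absurd heq.symm (Nat.ne_of_lt (rnk_strict_mono h (h₂.1.trans h₁.1.symm)))
            · intro r hr
              rw [Finset.mem_Icc] at hr
              obtain ⟨j, hji, hwj, hrj⟩ := rnk_surj (w := w) (i := j₀) hr.1 (by omega)
              refine ⟨j, ?_, hrj⟩
              simp only [hB, Finset.mem_filter, Finset.mem_univ, true_and]
              exact ⟨hwj, by omega⟩
          rw [Nat.card_Icc] at hbij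
          omega
        have hsub : (Finset.univ.filter (fun j : Fin n => w j < q)) ∪ B ⊆
            Finset.univ.filter (fun j : Fin n => α j < m) := by
          intro j hj
          simp only [hB, Finset.mem_union, Finset.mem_filter, Finset.mem_univ, true_and] at hj ⊢
          rcases hj with hj | hj
          · have := (phi_lt_start_iff (w := w) j q).mpr hj
            have hαj : α j = phi n w j := rfl
            omega
          · have hbltj : blt n w j = b₀ := by
              rw [blt_eq_scount, hj.1]
            have : α j = phi n w j := rfl
            have hrp := rnk_pos (w := w) j
            unfold phi at this
            omega
        have hdisj : Disjoint (Finset.univ.filter (fun j : Fin n => w j < q)) B := by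
          rw [hB, Finset.disjoint_filter]
          intro j _ h1
          rintro ⟨h2, -⟩
          omega
        have hcards := Finset.card_le_card hsub
        rw [Finset.card_union_of_disjoint hdisj, hcardB] at hcards
        have : cntLt n α m = (Finset.univ.filter (fun j : Fin n => α j < m)).card := rfl
        have hsq : (Finset.univ.filter (fun j : Fin n => w j < q)).card = b₀ := rfl
        omega
      refine ⟨q, ⟨hw.1 j₀, hqi⟩, by omega⟩
    · rintro ⟨q, ⟨hq1, hq2⟩, rfl⟩
      refine ⟨⟨by omega, ?_⟩, start_phi q⟩
      have h1 : scount n w q ≤ scount n w (w i) := scount_mono hq2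
      have h2 : blt n w i = scount n w (w i) := blt_eq_scount i
      have : α i = phi n w i := rfl
      unfold phi at this
      omega
  rw [hset, Finset.card_image_of_injOn, Nat.card_Icc]
  · omega
  · intro q hq q' hq' heq
    simp only [Finset.coe_Icc, Set.mem_Icc] at hq hq'
    have heq' : scount n w q + 1 = scount n w q' + 1 := heq
    rcases lt_trichotomy q q' with h | h | h
    · exact absurd (by omega : scount n w q = scount n w q')
        (Nat.ne_of_lt (scount_strict_mono hw hq.1 ⟨i, hq.2⟩ h))
    · exact h
    · exact absurd (by omega : scount n w q' = scount n w q)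
        (Nat.ne_of_lt (scount_strict_mono hw hq'.1 ⟨i, hq'.2⟩ h))



lemma cnt_split (α : Fin n → ℕ) {v V : ℕ} (h : v ≤ V) :
    cntLt n α v + (Finset.univ.filter (fun j : Fin n => v ≤ α j ∧ α j < V)).card
      = cntLt n α V := by
  unfold cntLt
  rw [← Finset.card_union_of_disjoint]
  · congr 1
    ext j
    simp only [Finset.mem_union, Finset.mem_filter, Finset.mem_univ, true_and]
    omega
  · rw [Finset.disjoint_left]
    intro j hj hj'
    simp only [Finset.mem_filter, Finset.mem_univ, true_and] at hj hj'
    omega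

lemma phi_psi {α : Fin n → ℕ} (hupf : IsUnitIntervalPF n α) : phi n (psi n α) = α := by
  classical
  obtain ⟨hbd, spot, hout, hsp⟩ := id hupf
  have hpos : ∀ i : Fin n, 1 ≤ α i := fun i => (hbd i).1
  have hlow : ∀ m ≤ n, m ≤ cntLt n α (m+1) := fun m hm => lowerA hout hm
  have hup : ∀ m, cntLt n α (m+1) ≤ m + 1 := upperA hout hsp
  set T : Fin n → Finset ℕ :=
    fun j => (Finset.Icc 1 (α j)).filter (fun m => cntLt n α m = m - 1) with hT
  have hmemT : ∀ (j : Fin n) (m : ℕ), m ∈ T j ↔ (1 ≤ m ∧ m ≤ α j) ∧ cntLt n α m = m - 1 := by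
    intro j m
    simp only [hT, Finset.mem_filter, Finset.mem_Icc]
  have hTne : ∀ j, (T j).Nonempty := by
    intro j
    exact ⟨1, (hmemT j 1).mpr ⟨⟨le_rfl, hpos j⟩, by rw [start_one hpos]⟩⟩
  set S : Fin n → ℕ := fun j => (T j).max' (hTne j) with hS
  have hSdata : ∀ j, (1 ≤ S j ∧ S j ≤ α j) ∧ cntLt n α (S j) = S j - 1 := by
    intro j
    exact (hmemT j (S j)).mp ((T j).max'_mem (hTne j))
  have hSle : ∀ (j : Fin n) (m : ℕ), 1 ≤ m → m ≤ α j → cntLt n α m = m - 1 → m ≤ S j := by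
    intro j m h1 h2 h3
    exact Finset.le_max' (T j) m ((hmemT j m).mpr ⟨⟨h1, h2⟩, h3⟩)
  have hF2 : ∀ (j : Fin n) (m : ℕ), S j < m → m ≤ α j → cntLt n α m = m := by
    intro j m h1 h2
    have hm1 : 1 ≤ m := by have := (hSdata j).1.1; omega
    have hmn : m - 1 ≤ n := by have := (hbd j).2; omega
    have hlo : m - 1 ≤ cntLt n α m := by
      have := hlow (m - 1) hmn
      have e : m - 1 + 1 = m := by omega
      rwa [e] at this
    have hhi : cntLt n α m ≤ m := by
      have := hup (m - 1)
      have e : m - 1 + 1 = m := by omega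
      rwa [e] at this
    by_contra hc
    have : cntLt n α m = m - 1 := by omega
    have := hSle j m hm1 h2 this
    omega
  have hpsiT : ∀ j, psi n α j = (T j).card := fun j => rfl
  have hlt_iff : ∀ i j : Fin n, psi n α j < psi n α i ↔ α j < S i := by
    intro i j
    constructor
    · intro h
      by_contra hc
      push_neg at hc
      have hsub : T i ⊆ T j := by
        intro m hm
        rw [hmemT] at hm ⊢
        refine ⟨⟨hm.1.1, ?_⟩, hm.2⟩
        have : m ≤ S i := Finset.le_max' (T i) m ((hmemT i m).mpr hm)
        omega
      have := Finset.card_le_card hsub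
      rw [hpsiT, hpsiT] at h
      omega
    · intro h
      rw [hpsiT, hpsiT]
      apply Finset.card_lt_card
      rw [Finset.ssubset_iff_of_subset]
      · refine ⟨S i, (hmemT i (S i)).mpr ⟨⟨(hSdata i).1.1, (hSdata i).1.2⟩, (hSdata i).2⟩, ?_⟩
        rw [hmemT]
        rintro ⟨⟨-, h2⟩, -⟩
        omega
      · intro m hm
        rw [hmemT] at hm ⊢
        have := (hSdata i).1.2
        exact ⟨⟨hm.1.1, by omega⟩, hm.2⟩
  have hblt : ∀ i, blt n (psi n α) i = S i - 1 := by
    intro i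
    unfold blt
    have heq : Finset.univ.filter (fun j : Fin n => psi n α j < psi n α i) =
        Finset.univ.filter (fun j : Fin n => α j < S i) := by
      apply Finset.filter_congr
      intro j _
      exact hlt_iff i j
    rw [heq]
    exact (hSdata i).2
  have hSeq_iff : ∀ i j : Fin n, psi n α j = psi n α i ↔ S j = S i := by
    intro i j
    constructor
    · intro h
      have h1 : ¬ (psi n α j < psi n α i) := by omega
      have h2 : ¬ (psi n α i < psi n α j) := by omega
      rw [hlt_iff i j] at h1
      rw [hlt_iff j i] at h2
      push_neg at h1 h2
      have ha : S i ≤ S j := hSle j (S i) (hSdata i).1.1 h1 (hSdata i).2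
      have hb : S j ≤ S i := hSle i (S j) (hSdata j).1.1 h2 (hSdata j).2
      omega
    · intro h
      have hTeq : T j = T i := by
        ext m
        rw [hmemT, hmemT]
        constructor
        · rintro ⟨⟨h1, h2⟩, h3⟩
          have : m ≤ S j := hSle j m h1 h2 h3
          have := (hSdata i).1.2
          exact ⟨⟨h1, by omega⟩, h3⟩
        · rintro ⟨⟨h1, h2⟩, h3⟩
          have : m ≤ S i := hSle i m h1 h2 h3
          have := (hSdata j).1.2
          exact ⟨⟨h1, by omega⟩, h3⟩
      rw [hpsiT, hpsiT, hTeq]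
  funext i
  have hrnkfilter : rnk n (psi n α) i =
      (Finset.univ.filter (fun j : Fin n => j ≤ i ∧ S j = S i)).card := by
    unfold rnk
    congr 1
    apply Finset.filter_congr
    intro j _
    constructor
    · rintro ⟨h1, h2⟩; exact ⟨h1, (hSeq_iff i j).mp h2⟩
    · rintro ⟨h1, h2⟩; exact ⟨h1, (hSeq_iff i j).mpr h2⟩
  have hSi1 := (hSdata i).1.1
  have hSile := (hSdata i).1.2
  have hstartSi := (hSdata i).2
  have hphi : phi n (psi n α) i = (S i - 1) + 1 + (rnk n (psi n α) i - 2) := by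
    unfold phi
    rw [hblt]
  rcases eq_or_lt_of_le hSile with hcase | hcase
  · -- α i = S i ; rnk ≤ 2
    have hsub : (Finset.univ.filter (fun j : Fin n => j ≤ i ∧ S j = S i)) ⊆
        (Finset.univ.filter (fun j : Fin n => S i ≤ α j ∧ α j < S i + 1)) := by
      intro j hj
      simp only [Finset.mem_filter, Finset.mem_univ, true_and] at hj ⊢
      obtain ⟨hj1, hj2⟩ := hj
      have hge : S i ≤ α j := by
        have := (hSdata j).1.2
        omega
      rcases eq_or_lt_of_le hj1 with rfl | hjlt
      · omega
      · -- j < i : show α j ≤ α i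
        by_contra hc
        push_neg at hc
        have hinv : α i < α j := by omega
        obtain ⟨m, hm1, hm2, hm3⟩ := propB hupf hjlt hinv
        have : m ≤ S j := hSle j m (by omega) hm2 hm3
        omega
    have hcard2 : (Finset.univ.filter (fun j : Fin n => S i ≤ α j ∧ α j < S i + 1)).card ≤ 2 := by
      have hsplit := cnt_split α (v := S i) (V := S i + 1) (by omega)
      have := hup (S i)
      omega
    have hrle := Finset.card_le_card hsub
    rw [← hrnkfilter] at hrle
    have hrpos : 1 ≤ rnk n (psi n α) i := rnk_pos i
    omega
  · -- S i < α i
    have hcnt_ai : cntLt n α (α i) = α i := hF2 i (α i) hcase le_rfl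
    have hmult1 : (Finset.univ.filter (fun j : Fin n => α i ≤ α j ∧ α j < α i + 1)).card ≤ 1 := by
      have hsplit := cnt_split α (v := α i) (V := α i + 1) (by omega)
      have := hup (α i)
      omega
    have hseteq : (Finset.univ.filter (fun j : Fin n => j ≤ i ∧ S j = S i)) =
        insert i (Finset.univ.filter (fun j : Fin n => S i ≤ α j ∧ α j < α i)) := by
      ext j
      simp only [Finset.mem_insert, Finset.mem_filter, Finset.mem_univ, true_and]
      constructor
      · rintro ⟨hj1, hj2⟩
        rcases eq_or_lt_of_le hj1 with rfl | hjlt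
        · exact Or.inl rfl
        · right
          have hge : S i ≤ α j := by
            have := (hSdata j).1.2
            omega
          refine ⟨hge, ?_⟩
          rcases lt_trichotomy (α j) (α i) with h | h | h
          · exact h
          · exfalso
            have hpair : ({j, i} : Finset (Fin n)) ⊆
                Finset.univ.filter (fun k : Fin n => α i ≤ α k ∧ α k < α i + 1) := by
              intro k hk
              simp only [Finset.mem_insert, Finset.mem_singleton] at hk
              simp only [Finset.mem_filter, Finset.mem_univ, true_and]
              rcases hk with rfl | rfl
              · omega
              · omega
            have := Finset.card_le_card hpair
            rw [Finset.card_pair (Fin.ne_of_lt hjlt)] at this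
            omega
          · exfalso
            obtain ⟨m, hm1, hm2, hm3⟩ := propB hupf hjlt h
            have : m ≤ S j := hSle j m (by omega) hm2 hm3
            omega
      · rintro (rfl | ⟨hj1, hj2⟩)
        · exact ⟨le_rfl, rfl⟩
        · have hSjge : S i ≤ S j := hSle j (S i) hSi1 hj1 hstartSi
          have hSjle : S j ≤ S i := by
            apply hSle i (S j) (hSdata j).1.1 ?_ (hSdata j).2
            have := (hSdata j).1.2
            omega
          refine ⟨?_, by omega⟩
          by_contra hc
          push_neg at hc
          obtain ⟨m, hm1, hm2, hm3⟩ := propB hupf hc hj2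
          have : m ≤ S i := hSle i m (by omega) hm2 hm3
          omega
    have hcardmid : (Finset.univ.filter (fun j : Fin n => S i ≤ α j ∧ α j < α i)).card
        = α i - S i + 1 := by
      have hsplit := cnt_split α (v := S i) (V := α i) (le_of_lt hcase)
      omega
    have hnotmem : i ∉ (Finset.univ.filter (fun j : Fin n => S i ≤ α j ∧ α j < α i)) := by
      simp only [Finset.mem_filter, Finset.mem_univ, true_and]
      omega
    have : rnk n (psi n α) i = α i - S i + 2 := by
      rw [hrnkfilter, hseteq, Finset.card_insert_of_notMem hnotmem, hcardmid]
    omega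

lemma inv_pres {α : Fin n → ℕ} (hupf : IsUnitIntervalPF n α) :
    {p : Fin n × Fin n | p.1 < p.2 ∧ psi n α p.2 < psi n α p.1} =
      {p : Fin n × Fin n | p.1 < p.2 ∧ α p.2 < α p.1} := by
  ext p
  simp only [Set.mem_setOf_eq]
  constructor
  · rintro ⟨h1, h2⟩
    refine ⟨h1, ?_⟩
    by_contra hc
    push_neg at hc
    have := psi_mono (α := α) (i := p.1) (i' := p.2) hc
    omega
  · rintro ⟨h1, h2⟩
    refine ⟨h1, ?_⟩
    obtain ⟨m, hm1, hm2, hm3⟩ := propB hupf h1 h2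
    have hpos : ∀ i : Fin n, 1 ≤ α i := fun i => (hupf.1 i).1
    apply Finset.card_lt_card
    rw [Finset.ssubset_iff_of_subset]
    · refine ⟨m, ?_, ?_⟩
      · simp only [Finset.mem_filter, Finset.mem_Icc]
        exact ⟨⟨by have := hpos p.2; omega, hm2⟩, hm3⟩
      · simp only [Finset.mem_filter, Finset.mem_Icc]
        rintro ⟨⟨-, h⟩, -⟩
        omega
    · intro x hx
      simp only [Finset.mem_filter, Finset.mem_Icc] at hx ⊢
      exact ⟨⟨hx.1.1, by omega⟩, hx.2⟩

end UPFP

/-- The map `ψ`, sending a unit interval parking function with block structure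
`π_1 | ⋯ | π_k` to the word whose `i`-th letter is the index of the block containing
`α_i`, is a bijection onto the set of Cayley permutations of length `n`, and it
preserves the inversion set. -/
theorem psi_bijOn_cayley_and_preserves_inversions (n : ℕ) :
    Set.BijOn (psi n) {α | IsUnitIntervalPF n α} {w | IsCayley n w} ∧
      ∀ α : Fin n → ℕ, IsUnitIntervalPF n α →
        {p : Fin n × Fin n | p.1 < p.2 ∧ psi n α p.2 < psi n α p.1} =
          {p : Fin n × Fin n | p.1 < p.2 ∧ α p.2 < α p.1} := by
  constructor
  · apply Set.InvOn.bijOn (f' := UPFP.phi n)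
    · constructor
      · intro α hα
        exact UPFP.phi_psi hα
      · intro w hw
        exact UPFP.psi_phi hw
    · intro α hα
      simp only [Set.mem_setOf_eq] at hα ⊢
      obtain ⟨hbd, spot, hout, hsp⟩ := id hα
      exact UPFP.psi_cayley (fun i => (hbd i).1) (fun i => (hbd i).2)
        (fun m hm => UPFP.lowerA hout hm)
    · intro w hw
      simp only [Set.mem_setOf_eq] at hw ⊢
      exact UPFP.phi_is_upf w
  · intro α hα
    exact UPFP.inv_pres hα
end

section
/- Let W be a finite subset of positive-integer words of length n that is invariant under the S_n-action permuting positions. Then the total number of inversions over W equals (n/2) times the total number of descents over W, i.e., 2 * sum_{w in W} inv(w) = n * sum_{w in W} des(w). -/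
/-- The number of inversions of a word: pairs `(i,j)` with `i < j` and `w i > w j`. -/
def invCount (n : ℕ) (w : Fin n → ℕ) : ℕ :=
  (Finset.univ.filter (fun p : Fin n × Fin n => p.1 < p.2 ∧ w p.2 < w p.1)).card

/-- The number of descents of a word: indices `i ∈ [n-1]` with `w i > w (i+1)`. -/
def desCount (n : ℕ) (w : Fin n → ℕ) : ℕ :=
  (Finset.univ.filter
    (fun p : Fin n × Fin n => (p.1 : ℕ) + 1 = (p.2 : ℕ) ∧ w p.2 < w p.1)).card

lemma exists_perm_pair {n : ℕ} {i j i' j' : Fin n} (h : i ≠ j) (h' : i' ≠ j') :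
    ∃ σ : Equiv.Perm (Fin n), σ i' = i ∧ σ j' = j := by
  set σ₁ := Equiv.swap i' i with hσ₁
  have hi : σ₁ i' = i := Equiv.swap_apply_left i' i
  have hne : σ₁ j' ≠ i := by
    rw [← hi]
    exact fun hh => h' (σ₁.injective hh).symm
  refine ⟨σ₁.trans (Equiv.swap (σ₁ j') j), ?_, ?_⟩
  · simp only [Equiv.trans_apply, hi]
    exact Equiv.swap_apply_of_ne_of_ne (Ne.symm hne) h
  · simp only [Equiv.trans_apply]
    exact Equiv.swap_apply_left _ _

lemma count_eq {n : ℕ} (W : Finset (Fin n → ℕ))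
    (hinv : ∀ w ∈ W, ∀ σ : Equiv.Perm (Fin n), (w ∘ σ) ∈ W)
    {i j i' j' : Fin n} (h : i ≠ j) (h' : i' ≠ j') :
    (W.filter fun w => w j < w i).card = (W.filter fun w => w j' < w i').card := by
  obtain ⟨σ, hi, hj⟩ := exists_perm_pair h h'
  apply Finset.card_bij (fun w _ => w ∘ σ)
  · intro w hw
    simp only [Finset.mem_filter] at hw ⊢
    exact ⟨hinv w hw.1 σ, by simpa [Function.comp, hi, hj] using hw.2⟩
  · intro w₁ h₁ w₂ h₂ hcomp
    funext x
    have := congrFun hcomp (σ.symm x)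
    simpa using this
  · intro v hv
    simp only [Finset.mem_filter] at hv
    refine ⟨v ∘ σ.symm, ?_, ?_⟩
    · simp only [Finset.mem_filter]
      constructor
      · exact hinv v hv.1 σ.symm
      · have hji : σ.symm j = j' := by rw [← hj]; simp
        have hii : σ.symm i = i' := by rw [← hi]; simp
        simpa [Function.comp, hji, hii] using hv.2
    · funext x; simp [Function.comp]

lemma ltPairs_card (n : ℕ) :
    2 * (Finset.univ.filter fun p : Fin n × Fin n => p.1 < p.2).card = n * (n - 1) := by
  have hswap : (Finset.univ.filter fun p : Fin n × Fin n => p.1 < p.2).card =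
      (Finset.univ.filter fun p : Fin n × Fin n => p.2 < p.1).card := by
    apply Finset.card_nbij Prod.swap
    · intro p hp; simp at hp ⊢; exact hp
    · intro p hp q hq hpq; exact Prod.swap_injective hpq
    · intro p hp; exact ⟨p.swap, by simpa using hp, by simp⟩
  have hunion : (Finset.univ.filter fun p : Fin n × Fin n => p.1 < p.2) ∪
      (Finset.univ.filter fun p : Fin n × Fin n => p.2 < p.1) =
      (Finset.univ : Finset (Fin n)).offDiag := by
    ext p
    simp only [Finset.mem_union, Finset.mem_filter, Finset.mem_univ, true_and,
      Finset.mem_offDiag, ne_eq]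
    exact lt_or_lt_iff_ne
  have hdisj : Disjoint (Finset.univ.filter fun p : Fin n × Fin n => p.1 < p.2)
      (Finset.univ.filter fun p : Fin n × Fin n => p.2 < p.1) := by
    rw [Finset.disjoint_left]
    intro p hp hq
    simp only [Finset.mem_filter] at hp hq
    exact absurd hq.2 (not_lt_of_gt hp.2)
  have hcard := Finset.card_union_of_disjoint hdisj
  rw [hunion, Finset.offDiag_card, Finset.card_univ, Fintype.card_fin] at hcard
  have hmp : n * (n - 1) = n * n - n := by
    cases n with
    | zero => simp
    | succ m =>
      have h : (m + 1) * (m + 1) = (m + 1) * m + (m + 1) := by ring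
      simp [Nat.succ_sub_one, h]
  omega

lemma succPairs_card (n : ℕ) :
    (Finset.univ.filter fun p : Fin n × Fin n => (p.1 : ℕ) + 1 = (p.2 : ℕ)).card = n - 1 := by
  have key := Finset.card_bij
    (s := (Finset.univ : Finset (Fin (n - 1))))
    (t := Finset.univ.filter fun p : Fin n × Fin n => (p.1 : ℕ) + 1 = (p.2 : ℕ))
    (fun (i : Fin (n - 1)) (_ : i ∈ (Finset.univ : Finset (Fin (n - 1)))) =>
      ((⟨(i : ℕ), by omega⟩ : Fin n), (⟨(i : ℕ) + 1, by omega⟩ : Fin n)))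
    (fun i _ => by simp)
    (fun a _ b _ hab => by
      simp only [Prod.mk.injEq, Fin.mk.injEq] at hab
      exact Fin.ext hab.1)
    (fun p hp => by
      simp only [Finset.mem_filter] at hp
      have hlt : (p.1 : ℕ) < n - 1 := by have := p.2.isLt; omega
      exact ⟨⟨(p.1 : ℕ), hlt⟩, Finset.mem_univ _, by
        have h2 : ((p.1 : ℕ) + 1) = (p.2 : ℕ) := hp.2
        refine Prod.ext ?_ ?_ <;> simp [Fin.ext_iff, h2]⟩)
  rw [Finset.card_fin] at key
  omega

/-- If `W` is a finite `S_n`-invariant set of words of positive integers, then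
`2 * ∑_{w ∈ W} inv w = n * ∑_{w ∈ W} des w`. -/
theorem two_mul_sum_inv_eq_n_mul_sum_des (n : ℕ) (W : Finset (Fin n → ℕ))
    (hpos : ∀ w ∈ W, ∀ i, 1 ≤ w i)
    (hinv : ∀ w ∈ W, ∀ σ : Equiv.Perm (Fin n), (w ∘ σ) ∈ W) :
    2 * ∑ w ∈ W, invCount n w = n * ∑ w ∈ W, desCount n w := by
  classical
  rcases lt_or_ge n 2 with hn | hn
  · -- n = 0 or 1 : no pairs at all
    have h1 : ∀ w, invCount n w = 0 := by
      intro w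
      rw [invCount, Finset.card_eq_zero, Finset.filter_eq_empty_iff]
      rintro p - ⟨hlt, -⟩
      have := p.2.isLt
      rw [Fin.lt_def] at hlt
      omega
    have h2 : ∀ w, desCount n w = 0 := by
      intro w
      rw [desCount, Finset.card_eq_zero, Finset.filter_eq_empty_iff]
      rintro p - ⟨hlt, -⟩
      have := p.2.isLt
      omega
    simp [h1, h2]
  · -- n ≥ 2
    have h0 : (0 : ℕ) < n := by omega
    have h1 : (1 : ℕ) < n := by omega
    have hinvsum : ∑ w ∈ W, invCount n w =
        ∑ p ∈ (Finset.univ.filter fun p : Fin n × Fin n => p.1 < p.2),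
          (W.filter fun w => w p.2 < w p.1).card := by
      simp only [invCount, Finset.card_filter]
      rw [Finset.sum_comm, Finset.sum_filter]
      apply Finset.sum_congr rfl
      intro p _
      by_cases hp : p.1 < p.2 <;> simp [hp]
    have hdessum : ∑ w ∈ W, desCount n w =
        ∑ p ∈ (Finset.univ.filter fun p : Fin n × Fin n => (p.1 : ℕ) + 1 = (p.2 : ℕ)),
          (W.filter fun w => w p.2 < w p.1).card := by
      simp only [desCount, Finset.card_filter]
      rw [Finset.sum_comm, Finset.sum_filter]
      apply Finset.sum_congr rfl
      intro p _
      by_cases hp : (p.1 : ℕ) + 1 = (p.2 : ℕ) <;> simp [hp]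
    set i0 : Fin n := ⟨0, h0⟩
    set j0 : Fin n := ⟨1, h1⟩
    have hij : i0 ≠ j0 := by simp [i0, j0, Fin.ext_iff]
    set c : ℕ := (W.filter fun w => w j0 < w i0).card with hc
    have heq1 : ∀ p ∈ (Finset.univ.filter fun p : Fin n × Fin n => p.1 < p.2),
        (W.filter fun w => w p.2 < w p.1).card = c := by
      intro p hp
      simp only [Finset.mem_filter] at hp
      exact count_eq W hinv (ne_of_lt hp.2) hij
    have heq2 : ∀ p ∈ (Finset.univ.filter fun p : Fin n × Fin n => (p.1 : ℕ) + 1 = (p.2 : ℕ)),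
        (W.filter fun w => w p.2 < w p.1).card = c := by
      intro p hp
      simp only [Finset.mem_filter] at hp
      have hne : p.1 ≠ p.2 := by
        intro hE; rw [hE] at hp; exact Nat.succ_ne_self _ hp.2
      exact count_eq W hinv hne hij
    rw [hinvsum, hdessum, Finset.sum_congr rfl heq1, Finset.sum_congr rfl heq2,
      Finset.sum_const, Finset.sum_const, smul_eq_mul, smul_eq_mul,
      succPairs_card, ← mul_assoc, ltPairs_card, ← mul_assoc]
end

section
/- Let W be a finite S_n-invariant subset of positive-integer words of length n. Then the total number of inversions over W equals C(n,2) times the number of words in W whose first entry exceeds the second entry, and the total number of descents over W equals (n-1) times the number of words in W whose first entry exceeds the second entry. -/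
lemma card_lt_pairs (n : ℕ) :
    (Finset.univ.filter (fun p : Fin n × Fin n => p.1 < p.2)).card = n.choose 2 := by
  rw [Finset.card_filter, Fintype.sum_prod_type_right]
  have h1 : ∀ j : Fin n, (∑ i : Fin n, if i < j then 1 else 0) = (j : ℕ) := by
    intro j
    rw [Finset.sum_boole]
    have : Finset.univ.filter (fun i : Fin n => i < j) = Finset.Iio j := by
      ext i; simp
    rw [this, Fin.card_Iio]; simp
  simp only [h1]
  rw [Fin.sum_univ_eq_sum_range (fun i => i), Finset.sum_range_id, Nat.choose_two_right]

lemma card_succ_pairs (n : ℕ) :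
    (Finset.univ.filter (fun p : Fin n × Fin n => (p.1 : ℕ) + 1 = (p.2 : ℕ))).card = n - 1 := by
  rw [← Finset.card_range (n-1)]
  apply Finset.card_bij (fun p _ => (p.1 : ℕ))
  · rintro ⟨i, j⟩ hp
    simp only [Finset.mem_filter] at hp
    simp only [Finset.mem_range]
    have := j.isLt
    omega
  · rintro ⟨i, j⟩ hi ⟨i', j'⟩ hj h
    simp only [Finset.mem_filter] at hi hj
    simp only at h
    have : i = i' := Fin.ext h
    subst this
    have : j = j' := Fin.ext (by omega)
    subst this; rfl
  · intro k hk
    simp only [Finset.mem_range] at hk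
    refine ⟨(⟨k, by omega⟩, ⟨k+1, by omega⟩), ?_, rfl⟩
    simp

lemma filter_card_pair (n : ℕ) (hn : 1 < n) (W : Finset (Fin n → ℕ))
    (hinvW : ∀ w ∈ W, ∀ σ : Equiv.Perm (Fin n), (w ∘ σ) ∈ W)
    (i j : Fin n) (hij : i ≠ j) :
    (W.filter (fun w => w j < w i)).card =
      (W.filter (fun w => w ⟨1, by omega⟩ < w ⟨0, by omega⟩)).card := by
  have h01 : (⟨0, by omega⟩ : Fin n) ≠ ⟨1, by omega⟩ := by
    simp [Fin.ext_iff]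
  set τ : Equiv.Perm (Fin n) := Equiv.swap ⟨0, by omega⟩ i with hτ
  have hk : τ⁻¹ j ≠ ⟨0, by omega⟩ := by
    intro h
    have : j = τ ⟨0, by omega⟩ := by rw [← h]; simp
    rw [hτ, Equiv.swap_apply_left] at this
    exact hij this.symm
  set σ : Equiv.Perm (Fin n) := τ * Equiv.swap ⟨1, by omega⟩ (τ⁻¹ j) with hσ
  have hσ0 : σ ⟨0, by omega⟩ = i := by
    rw [hσ]
    simp only [Equiv.Perm.mul_apply]
    rw [Equiv.swap_apply_of_ne_of_ne h01 (Ne.symm hk)]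
    simp [hτ]
  have hσ1 : σ ⟨1, by omega⟩ = j := by
    rw [hσ]
    simp only [Equiv.Perm.mul_apply]
    rw [Equiv.swap_apply_left]
    simp
  apply Finset.card_bij' (fun w _ => w ∘ ⇑σ) (fun w _ => w ∘ ⇑σ⁻¹)
  · intro w hw
    simp only [Finset.mem_filter] at hw ⊢
    exact ⟨hinvW w hw.1 σ, by simpa [Function.comp, hσ0, hσ1] using hw.2⟩
  · intro w hw
    simp only [Finset.mem_filter] at hw ⊢
    refine ⟨hinvW w hw.1 σ⁻¹, ?_⟩
    have h1 : (w ∘ ⇑σ⁻¹) j = w ⟨1, by omega⟩ := by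
      simp [Function.comp, ← hσ1]
    have h0 : (w ∘ ⇑σ⁻¹) i = w ⟨0, by omega⟩ := by
      simp [Function.comp, ← hσ0]
    rw [h1, h0]; exact hw.2
  · intro w hw; ext x; simp [Function.comp]
  · intro w hw; ext x; simp [Function.comp]

/-- If `W` is a finite `S_n`-invariant set of words of positive integers, then the
total number of inversions over `W` is `C(n,2)` times the number of words in `W`
whose first entry exceeds the second, and the total number of descents over `W` is
`(n-1)` times that number. -/
theorem sum_inv_and_sum_des_via_first_descent (n : ℕ) (hn : 2 ≤ n)
    (W : Finset (Fin n → ℕ))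
    (hpos : ∀ w ∈ W, ∀ i, 1 ≤ w i)
    (hinvW : ∀ w ∈ W, ∀ σ : Equiv.Perm (Fin n), (w ∘ σ) ∈ W) :
    (∑ w ∈ W, invCount n w =
      Nat.choose n 2 *
        (W.filter (fun w => w ⟨1, by omega⟩ < w ⟨0, by omega⟩)).card) ∧
    (∑ w ∈ W, desCount n w =
      (n - 1) *
        (W.filter (fun w => w ⟨1, by omega⟩ < w ⟨0, by omega⟩)).card) := by
  set N := (W.filter (fun w => w ⟨1, by omega⟩ < w ⟨0, by omega⟩)).card with hN
  constructor
  · have key : ∀ w : Fin n → ℕ, invCount n w =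
        ∑ p ∈ Finset.univ.filter (fun p : Fin n × Fin n => p.1 < p.2),
          (if w p.2 < w p.1 then 1 else 0) := by
      intro w
      rw [invCount, Finset.card_filter, Finset.sum_filter]
      simp only [← ite_and]
    simp only [key]
    rw [Finset.sum_comm]
    have step : ∀ p ∈ Finset.univ.filter (fun p : Fin n × Fin n => p.1 < p.2),
        (∑ w ∈ W, if w p.2 < w p.1 then 1 else 0) = N := by
      intro p hp
      simp only [Finset.mem_filter] at hp
      rw [Finset.sum_boole]
      rw [filter_card_pair n hn W hinvW p.1 p.2 (ne_of_lt hp.2)]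
      simp [hN]
    rw [Finset.sum_congr rfl step, Finset.sum_const, card_lt_pairs, smul_eq_mul]
  · have key : ∀ w : Fin n → ℕ, desCount n w =
        ∑ p ∈ Finset.univ.filter (fun p : Fin n × Fin n => (p.1 : ℕ) + 1 = (p.2 : ℕ)),
          (if w p.2 < w p.1 then 1 else 0) := by
      intro w
      rw [desCount, Finset.card_filter, Finset.sum_filter]
      simp only [← ite_and]
    simp only [key]
    rw [Finset.sum_comm]
    have step : ∀ p ∈ Finset.univ.filter
          (fun p : Fin n × Fin n => (p.1 : ℕ) + 1 = (p.2 : ℕ)),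
        (∑ w ∈ W, if w p.2 < w p.1 then 1 else 0) = N := by
      intro p hp
      simp only [Finset.mem_filter] at hp
      rw [Finset.sum_boole]
      have hne : p.1 ≠ p.2 := by
        intro h
        have hv : (p.1 : ℕ) = (p.2 : ℕ) := congrArg Fin.val h
        clear key hN
        omega
      rw [filter_card_pair n hn W hinvW p.1 p.2 hne]
      simp [hN]
    rw [Finset.sum_congr rfl step, Finset.sum_const, card_succ_pairs, smul_eq_mul]
end
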